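/- arXiv:2601.09094 — 4 statements merged into one kernel-verified Lean document; each statement's English description precedes it below -/
import Mathlib

section
/- Let $\gamma\in(0,\infty)$, $n=1$, $p=q=1$. Suppose there exists a constant $C>0$ such that for every $s\in(0,1)$ and every $f\in\dot{W}^{1,1}(\mathbb{R})$, $(1-s)^\gamma\int_{\mathbb{R}}\int_{|h|\le 1}\frac{|f(x+h)-f(x)|}{|h|^{1+s}}\,dh\,dx\le C\,\|f'\|_{L^1(\mathbb{R})}$. Then $\gamma\ge 1$. -/
open MeasureTheory Real Set
open scoped Classical ENNReal

noncomputable section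

namespace Paper

variable {n : ℕ}

/-- The `k`-th order difference `Δ_h^k f (x)`. -/
def kdiff (k : ℕ) (f : EuclideanSpace ℝ (Fin n) → ℝ)
    (h x : EuclideanSpace ℝ (Fin n)) : ℝ :=
  ∑ j ∈ Finset.range (k + 1), (-1 : ℝ) ^ (k - j) * (k.choose j : ℝ) * f (x + j • h)

/-- Axis-parallel cubes. -/
def IsCube (Q : Set (EuclideanSpace ℝ (Fin n))) : Prop :=
  ∃ (a : EuclideanSpace ℝ (Fin n)) (l : ℝ), 0 < l ∧
    Q = {x | ∀ i, x i ∈ Set.Ico (a i) (a i + l)}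

/-- `ω` satisfies the `A₁` condition with constant `C`. -/
def MemA1 (ω : EuclideanSpace ℝ (Fin n) → ℝ) (C : ℝ) : Prop :=
  ∀ Q : Set (EuclideanSpace ℝ (Fin n)), IsCube Q →
    ∀ᵐ y ∂(volume.restrict Q), (⨍ x in Q, ω x) ≤ C * ω y

/-- `ω` satisfies the `A_p` condition (`p > 1`) with constant `C`. -/
def MemApGt (p : ℝ) (ω : EuclideanSpace ℝ (Fin n) → ℝ) (C : ℝ) : Prop :=
  ∀ Q : Set (EuclideanSpace ℝ (Fin n)), IsCube Q →
    IntegrableOn (fun x => ω x ^ (-1 / (p - 1))) Q volume ∧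
    (⨍ x in Q, ω x) * (⨍ x in Q, ω x ^ (-1 / (p - 1))) ^ (p - 1) ≤ C

/-- `A_p` condition for `p ∈ [1, ∞)`. -/
def MemAp (p : ℝ) (ω : EuclideanSpace ℝ (Fin n) → ℝ) (C : ℝ) : Prop :=
  if p = 1 then MemA1 ω C else MemApGt p ω C

/-- The Muckenhoupt constant `[ω]_{A_p}`. -/
def ApConst (p : ℝ) (ω : EuclideanSpace ℝ (Fin n) → ℝ) : ℝ :=
  sInf {C : ℝ | 0 ≤ C ∧ MemAp p ω C}

/-- `ω ∈ A_p`: nonnegative, locally integrable, satisfying the `A_p` condition. -/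
def IsAp (p : ℝ) (ω : EuclideanSpace ℝ (Fin n) → ℝ) : Prop :=
  (∀ x, 0 ≤ ω x) ∧ LocallyIntegrable ω volume ∧ ∃ C : ℝ, MemAp p ω C

/-- The `A₁` constant. -/
abbrev A1const (ω : EuclideanSpace ℝ (Fin n) → ℝ) : ℝ := ApConst 1 ω

/-- `ω ∈ A₁`. -/
abbrev IsA1 (ω : EuclideanSpace ℝ (Fin n) → ℝ) : Prop := IsAp 1 ω

/-- The critical exponent `p_ω := inf {r ∈ [1,∞) : ω ∈ A_r}`. -/
def pExp (ω : EuclideanSpace ℝ (Fin n) → ℝ) : ℝ :=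
  sInf {r : ℝ | 1 ≤ r ∧ IsAp r ω}

/-- Classical partial derivative in the `i`-th coordinate direction. -/
def pd (i : Fin n) (φ : EuclideanSpace ℝ (Fin n) → ℝ) :
    EuclideanSpace ℝ (Fin n) → ℝ :=
  fun x => fderiv ℝ φ x (EuclideanSpace.single i 1)

/-- The classical partial derivative `∂^α φ` for a multi-index `α`. -/
def pdMulti (α : Fin n → ℕ) (φ : EuclideanSpace ℝ (Fin n) → ℝ) :
    EuclideanSpace ℝ (Fin n) → ℝ :=
  (List.finRange n).foldr (fun i ψ => (pd i)^[α i] ψ) φ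

/-- `g` is the weak `α`-th partial derivative of `f`. -/
def HasWeakPD (α : Fin n → ℕ) (f g : EuclideanSpace ℝ (Fin n) → ℝ) : Prop :=
  ∀ φ : EuclideanSpace ℝ (Fin n) → ℝ, ContDiff ℝ (⊤ : ℕ∞) φ → HasCompactSupport φ →
    ∫ x, f x * pdMulti α φ x = (-1 : ℝ) ^ (∑ i, α i) * ∫ x, g x * φ x

/-- The multi-indices of order exactly `k`. -/
def multiIdx (n k : ℕ) : Finset (Fin n → ℕ) :=
  ((Finset.univ : Finset (Fin n → Fin (k + 1))).image fun a i => (a i : ℕ)).filter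
    fun α => ∑ i, α i = k

/-- The multi-indices of order at most `k`. -/
def multiIdxLE (n k : ℕ) : Finset (Fin n → ℕ) :=
  ((Finset.univ : Finset (Fin n → Fin (k + 1))).image fun a i => (a i : ℕ)).filter
    fun α => ∑ i, α i ≤ k

/-- `|∇^k f|` built from a family `g` of the `k`-th order (weak) partial derivatives. -/
def gradNorm (n k : ℕ) (g : (Fin n → ℕ) → EuclideanSpace ℝ (Fin n) → ℝ)
    (x : EuclideanSpace ℝ (Fin n)) : ℝ :=
  Real.sqrt (∑ α ∈ multiIdx n k, g α x ^ 2)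

end Paper

open Paper

namespace Aux7

/-- The tent function. -/
def tentF : ℝ → ℝ := fun x => max 0 (min x (2 - x))

/-- Its weak derivative. -/
def tentG : ℝ → ℝ := fun x =>
  (Set.Ioc (0:ℝ) 1).indicator 1 x - (Set.Ioc (1:ℝ) 2).indicator 1 x

lemma tentF_cont : Continuous tentF :=
  continuous_const.max (continuous_id.min (continuous_const.sub continuous_id))

lemma tentF_lip : ∀ a b : ℝ, |tentF a - tentF b| ≤ |a - b| := by
  have L : LipschitzWith 1 tentF := by
    have h1 : LipschitzWith 1 (fun x : ℝ => x) := LipschitzWith.id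
    have h2 : LipschitzWith 1 (fun x : ℝ => 2 - x) := by
      simpa using (LipschitzWith.const (2:ℝ)).sub LipschitzWith.id
    have h3 : LipschitzWith 1 (fun x : ℝ => min x (2 - x)) := by
      simpa using h1.min h2
    have h4 : LipschitzWith 1 (fun x : ℝ => max (0:ℝ) (min x (2 - x))) := by
      simpa using (LipschitzWith.const (0:ℝ)).max h3
    exact h4
  intro a b
  have := L.dist_le_mul a b
  simpa [Real.dist_eq] using this

lemma tentF_zero {x : ℝ} (hx : x ≤ 0 ∨ 2 ≤ x) : tentF x = 0 := by
  unfold tentF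
  rcases hx with h | h
  · exact max_eq_left ((min_le_left _ _).trans h)
  · exact max_eq_left ((min_le_right _ _).trans (by linarith))

lemma tentF_id {x : ℝ} (h0 : 0 ≤ x) (h1 : x ≤ 1) : tentF x = x := by
  unfold tentF
  rw [min_eq_left (by linarith), max_eq_right h0]

lemma tentF_two_sub {x : ℝ} (h1 : 1 ≤ x) (h2 : x ≤ 2) : tentF x = 2 - x := by
  unfold tentF
  rw [min_eq_right (by linarith), max_eq_right (by linarith)]

lemma tentG_int : Integrable tentG := by
  apply Integrable.sub <;>
  · rw [integrable_indicator_iff measurableSet_Ioc]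
    exact integrableOn_const (by simp) (by simp)

lemma tentG_abs_integral : ∫ x, |tentG x| = 2 := by
  have h : ∀ x : ℝ, |tentG x| = (Set.Ioc (0:ℝ) 2).indicator 1 x := by
    intro x
    simp only [tentG, Set.indicator, Set.mem_Ioc, Pi.one_apply]
    split_ifs <;> simp_all <;> linarith
  rw [show (fun x => |tentG x|) = (Set.Ioc (0:ℝ) 2).indicator 1 from funext h]
  rw [integral_indicator_one measurableSet_Ioc]
  simp [Real.volume_Ioc]

lemma tent_weak (φ : ℝ → ℝ) (hφ : ContDiff ℝ (⊤ : ℕ∞) φ) (hc : HasCompactSupport φ) :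
    ∫ x, tentF x * deriv φ x = -∫ x, tentG x * φ x := by
  have hφd : Differentiable ℝ φ := hφ.differentiable (by simp)
  have hφc : Continuous φ := hφ.continuous
  have hdc : Continuous (deriv φ) := hφ.continuous_deriv (by exact_mod_cast le_top)
  -- LHS as an interval integral
  have hsupp : ∀ x : ℝ, x ∉ Set.Ioc (0:ℝ) 2 → tentF x * deriv φ x = 0 := by
    intro x hx
    rw [Set.mem_Ioc, not_and_or] at hx
    have : tentF x = 0 := by
      apply tentF_zero
      rcases hx with h | h
      · exact Or.inl (by linarith [not_lt.mp h])
      · exact Or.inr (by linarith [not_le.mp h])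
    simp [this]
  have h1 : ∫ x, tentF x * deriv φ x = ∫ x in (0:ℝ)..2, tentF x * deriv φ x := by
    rw [intervalIntegral.integral_of_le (by norm_num)]
    exact (setIntegral_eq_integral_of_forall_compl_eq_zero hsupp).symm
  have hii : ∀ a b : ℝ, IntervalIntegrable (fun x => tentF x * deriv φ x) volume a b :=
    fun a b => (tentF_cont.mul hdc).intervalIntegrable a b
  have hsplit : ∫ x in (0:ℝ)..2, tentF x * deriv φ x
      = (∫ x in (0:ℝ)..1, tentF x * deriv φ x) + ∫ x in (1:ℝ)..2, tentF x * deriv φ x :=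
    (intervalIntegral.integral_add_adjacent_intervals (hii 0 1) (hii 1 2)).symm
  have hA : ∫ x in (0:ℝ)..1, tentF x * deriv φ x = φ 1 - ∫ x in (0:ℝ)..1, φ x := by
    have := intervalIntegral.integral_mul_deriv_eq_deriv_mul
      (u := fun x : ℝ => x) (u' := fun _ => (1:ℝ)) (v := φ) (v' := deriv φ)
      (fun x _ => hasDerivAt_id x) (fun x _ => (hφd x).hasDerivAt)
      (intervalIntegrable_const) (hdc.intervalIntegrable 0 1)
    rw [intervalIntegral.integral_congr (g := fun x => x * deriv φ x)
      (fun x hx => by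
        rw [Set.uIcc_of_le (by norm_num : (0:ℝ) ≤ 1)] at hx
        simp [tentF_id hx.1 hx.2])]
    rw [this]
    simp [intervalIntegral.integral_congr (g := φ)
      (fun x _ => one_mul (φ x))]
  have hB : ∫ x in (1:ℝ)..2, tentF x * deriv φ x = -φ 1 + ∫ x in (1:ℝ)..2, φ x := by
    have := intervalIntegral.integral_mul_deriv_eq_deriv_mul
      (u := fun x : ℝ => 2 - x) (u' := fun _ => (-1:ℝ)) (v := φ) (v' := deriv φ)
      (fun x _ => by simpa using ((hasDerivAt_id x).const_sub 2))
      (fun x _ => (hφd x).hasDerivAt)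
      (intervalIntegrable_const) (hdc.intervalIntegrable 1 2)
    rw [intervalIntegral.integral_congr (g := fun x => (2 - x) * deriv φ x)
      (fun x hx => by
        rw [Set.uIcc_of_le (by norm_num : (1:ℝ) ≤ 2)] at hx
        simp [tentF_two_sub hx.1 hx.2])]
    rw [this]
    have : ∫ x in (1:ℝ)..2, (-1) * φ x = -∫ x in (1:ℝ)..2, φ x := by
      simp [intervalIntegral.integral_neg]
    rw [this]
    ring
  -- RHS
  have hrhs : ∫ x, tentG x * φ x = (∫ x in (0:ℝ)..1, φ x) - ∫ x in (1:ℝ)..2, φ x := by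
    have hpt : ∀ x : ℝ, tentG x * φ x
        = (Set.Ioc (0:ℝ) 1).indicator φ x - (Set.Ioc (1:ℝ) 2).indicator φ x := by
      intro x
      simp only [tentG, Set.indicator, Pi.one_apply]
      split_ifs <;> ring
    rw [show (fun x => tentG x * φ x)
        = fun x => (Set.Ioc (0:ℝ) 1).indicator φ x - (Set.Ioc (1:ℝ) 2).indicator φ x
        from funext hpt]
    rw [integral_sub, integral_indicator measurableSet_Ioc, integral_indicator measurableSet_Ioc,
      intervalIntegral.integral_of_le (by norm_num : (0:ℝ) ≤ 1),
      intervalIntegral.integral_of_le (by norm_num : (1:ℝ) ≤ 2)]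
    · rw [integrable_indicator_iff measurableSet_Ioc]
      exact hφc.integrableOn_Ioc
    · rw [integrable_indicator_iff measurableSet_Ioc]
      exact hφc.integrableOn_Ioc
  rw [h1, hsplit, hA, hB, hrhs]
  ring


lemma key (s : ℝ) (hs0 : 0 < s) (hs1 : s < 1) :
    1 / (4 * (1 - s)) ≤ ∫ x : ℝ, ∫ h in Set.Icc (-1 : ℝ) 1,
      |tentF (x + h) - tentF x| / |h| ^ (1 + s) := by
  have h1s : (0:ℝ) < 1 - s := by linarith
  set ψ : ℝ → ℝ := fun h => |h| ^ (-s) with hψdef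
  set G : ℝ → ℝ → ℝ := fun x h => |tentF (x + h) - tentF x| / |h| ^ (1 + s) with hGdef
  set F : ℝ → ℝ := fun x => ∫ h in Set.Icc (-1 : ℝ) 1, G x h with hFdef
  have hψ0 : ψ 0 = 0 := by
    simp [hψdef, Real.zero_rpow (neg_ne_zero.2 hs0.ne')]
  have hGnn : ∀ x h, 0 ≤ G x h := fun x h =>
    div_nonneg (abs_nonneg _) (Real.rpow_nonneg (abs_nonneg _) _)
  have hGψ : ∀ x h, G x h ≤ ψ h := by
    intro x h
    rcases eq_or_ne h 0 with rfl | hne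
    · simp [hGdef, hψ0]
    · have hpos : 0 < |h| := abs_pos.2 hne
      have hnum : |tentF (x + h) - tentF x| ≤ |h| := by
        simpa using tentF_lip (x + h) x
      have hd : 0 < |h| ^ (1 + s) := Real.rpow_pos_of_pos hpos _
      calc G x h ≤ |h| / |h| ^ (1 + s) := (div_le_div_iff_of_pos_right hd).mpr hnum
          _ = ψ h := by
            show |h| / |h| ^ (1 + s) = |h| ^ (-s)
            rw [Real.rpow_add hpos, Real.rpow_one, Real.rpow_neg (abs_nonneg h)]
            field_simp
  have hψint : IntegrableOn ψ (Set.Icc (-1:ℝ) 1) volume := by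
    have h01 : IntervalIntegrable ψ volume 0 1 := by
      have hri := intervalIntegral.intervalIntegrable_rpow' (a := 0) (b := 1) (r := -s)
        (by linarith)
      rw [intervalIntegrable_iff] at hri ⊢
      apply hri.congr_fun ?_ measurableSet_uIoc
      intro h hh
      rw [Set.uIoc_of_le (by norm_num : (0:ℝ) ≤ 1)] at hh
      simp [hψdef, abs_of_pos hh.1]
    have hneg : IntervalIntegrable ψ volume (-1) 0 := by
      rw [IntervalIntegrable.iff_comp_neg]
      have : (fun x => ψ (-x)) = ψ := funext fun x => by simp [hψdef, abs_neg]
      rw [this]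
      simpa using h01.symm
    have := hneg.trans h01
    rwa [intervalIntegrable_iff_integrableOn_Icc_of_le (by norm_num)] at this
  have hGm : StronglyMeasurable (Function.uncurry G) := by
    apply Measurable.stronglyMeasurable
    apply Measurable.div
    · exact ((tentF_cont.comp (continuous_fst.add continuous_snd)).sub
        (tentF_cont.comp continuous_fst)).abs.measurable
    · exact (measurable_snd.abs).pow measurable_const
  have hFm : StronglyMeasurable F :=
    hGm.integral_prod_right
  have hGint : ∀ x, IntegrableOn (G x) (Set.Icc (-1:ℝ) 1) volume := by
    intro x
    apply Integrable.mono' hψint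
    · exact ((hGm.comp_measurable (measurable_prodMk_left)).aestronglyMeasurable)
    · exact Filter.Eventually.of_forall fun h => by
        rw [Real.norm_eq_abs, abs_of_nonneg (hGnn x h)]; exact hGψ x h
  set M : ℝ := ∫ h in Set.Icc (-1:ℝ) 1, ψ h with hMdef
  have hFle : ∀ x, F x ≤ M := fun x =>
    integral_mono_of_nonneg (Filter.Eventually.of_forall (hGnn x)) hψint
      (Filter.Eventually.of_forall (hGψ x))
  have hFnn : ∀ x, 0 ≤ F x := fun x => integral_nonneg (hGnn x)
  have hF0 : ∀ x ∉ Set.Icc (-1:ℝ) 3, F x = 0 := by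
    intro x hx
    apply setIntegral_eq_zero_of_forall_eq_zero
    intro h hh
    rw [Set.mem_Icc, not_and_or] at hx
    rw [Set.mem_Icc] at hh
    have h₁ : tentF (x + h) = 0 ∧ tentF x = 0 := by
      rcases hx with h' | h'
      · have : x < -1 := not_le.mp h'
        exact ⟨tentF_zero (Or.inl (by linarith [hh.1])), tentF_zero (Or.inl (by linarith))⟩
      · have : 3 < x := not_le.mp h'
        exact ⟨tentF_zero (Or.inr (by linarith [hh.1])), tentF_zero (Or.inr (by linarith))⟩
    simp [hGdef, h₁.1, h₁.2]
  have hFint : Integrable F := by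
    apply Integrable.mono' (g := (Set.Icc (-1:ℝ) 3).indicator (fun _ => M))
    · rw [integrable_indicator_iff measurableSet_Icc]
      exact integrableOn_const (by simp) (by simp)
    · exact hFm.aestronglyMeasurable
    · apply Filter.Eventually.of_forall
      intro x
      by_cases hx : x ∈ Set.Icc (-1:ℝ) 3
      · rw [Set.indicator_of_mem hx, Real.norm_eq_abs, abs_of_nonneg (hFnn x)]
        exact hFle x
      · rw [Set.indicator_of_notMem hx, hF0 x hx]
        simp
  set c : ℝ := ∫ h in Set.Ioc (0:ℝ) (1/2), ψ h with hcdef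
  have hcval : c = (1/2 : ℝ) ^ (1 - s) / (1 - s) := by
    have e1 : c = ∫ h in Set.Ioc (0:ℝ) (1/2), h ^ (-s) := by
      apply setIntegral_congr_fun measurableSet_Ioc
      intro h hh
      simp [hψdef, abs_of_pos hh.1]
    have e2 : (∫ h in Set.Ioc (0:ℝ) (1/2), h ^ (-s))
        = ∫ h in (0:ℝ)..(1/2), h ^ (-s) := by
      rw [intervalIntegral.integral_of_le (by norm_num : (0:ℝ) ≤ 1/2)]
    rw [e1, e2, integral_rpow (Or.inl (by linarith))]
    rw [Real.zero_rpow (by linarith : -s + 1 ≠ 0)]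
    norm_num
    rw [show -s + 1 = 1 - s by ring]
  have hcge : 1 / (2 * (1 - s)) ≤ c := by
    rw [hcval]
    have : (1/2 : ℝ) ^ (1:ℝ) ≤ (1/2 : ℝ) ^ (1 - s) :=
      Real.rpow_le_rpow_of_exponent_ge (by norm_num) (by norm_num) (by linarith)
    rw [Real.rpow_one] at this
    rw [div_le_div_iff₀ (by positivity) h1s]
    nlinarith
  have hFc : ∀ x ∈ Set.Ioo (0:ℝ) (1/2), c ≤ F x := by
    intro x hx
    have step1 : ∫ h in Set.Ioc (0:ℝ) (1/2), G x h ≤ F x := by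
      apply setIntegral_mono_set (hGint x)
      · exact Filter.Eventually.of_forall (hGnn x)
      · apply HasSubset.Subset.eventuallyLE
        intro h hh
        rw [Set.mem_Ioc] at hh
        exact Set.mem_Icc.2 ⟨by linarith [hh.1], by linarith [hh.2]⟩
    have step2 : ∫ h in Set.Ioc (0:ℝ) (1/2), G x h = c := by
      apply setIntegral_congr_fun measurableSet_Ioc
      intro h hh
      rw [Set.mem_Ioc] at hh
      have hx1 : tentF x = x := tentF_id hx.1.le (by linarith [hx.2])
      have hx2 : tentF (x + h) = x + h := tentF_id (by linarith [hx.1]) (by linarith [hx.2, hh.2])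
      simp only [hGdef, hψdef, hx1, hx2]
      rw [show x + h - x = h by ring, abs_of_pos hh.1,
        Real.rpow_add hh.1, Real.rpow_one, Real.rpow_neg hh.1.le]
      rw [inv_eq_one_div, div_mul_eq_div_div, div_self hh.1.ne']
    linarith
  have big1 : ∫ x in Set.Ioo (0:ℝ) (1/2), F x ≤ ∫ x, F x :=
    setIntegral_le_integral hFint (Filter.Eventually.of_forall hFnn)
  have big2 : c * (1/2) ≤ ∫ x in Set.Ioo (0:ℝ) (1/2), F x := by
    have := setIntegral_mono_on (f := fun _ => c) (g := F)
      (integrableOn_const (by simp) (by simp)) (hFint.integrableOn)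
      measurableSet_Ioo hFc
    rwa [setIntegral_const, measureReal_def, Real.volume_Ioo, smul_eq_mul,
      show ((1:ℝ)/2 - 0) = 1/2 by norm_num, ENNReal.toReal_ofReal (by norm_num : (0:ℝ) ≤ 1/2),
      mul_comm] at this
  have : 1 / (4 * (1 - s)) ≤ c * (1/2) := by
    have h2 : 1 / (4 * (1 - s)) = (1 / (2 * (1 - s))) * (1/2) := by
      field_simp
      ring
    rw [h2]
    exact mul_le_mul_of_nonneg_right hcge (by norm_num)
  calc 1 / (4 * (1 - s)) ≤ c * (1/2) := this
    _ ≤ ∫ x in Set.Ioo (0:ℝ) (1/2), F x := big2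
    _ ≤ ∫ x, F x := big1

end Aux7

open Aux7

/-- Proposition 2.6, Case 1 (`n = 1`, `p = q = 1`): sharpness of the factor `1 - s`. -/
theorem statement7 (γ C : ℝ) (hγ : 0 < γ) (hC : 0 < C)
    (H : ∀ s ∈ Set.Ioo (0 : ℝ) 1, ∀ f g : ℝ → ℝ,
      LocallyIntegrable f volume → Integrable g →
      (∀ φ : ℝ → ℝ, ContDiff ℝ (⊤ : ℕ∞) φ → HasCompactSupport φ →
        ∫ x, f x * deriv φ x = -∫ x, g x * φ x) →
      (1 - s) ^ γ * ∫ x : ℝ, ∫ h in Set.Icc (-1 : ℝ) 1,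
          |f (x + h) - f x| / |h| ^ (1 + s) ≤ C * ∫ x, |g x|) :
    1 ≤ γ := by
  by_contra hγ1
  push_neg at hγ1
  have key2 : ∀ s ∈ Set.Ioo (0:ℝ) 1, (1 - s) ^ (γ - 1) ≤ 8 * C := by
    intro s hs
    have hH := H s hs tentF tentG (tentF_cont.locallyIntegrable) tentG_int
      (fun φ hφ hc => tent_weak φ hφ hc)
    rw [tentG_abs_integral] at hH
    have hI := key s hs.1 hs.2
    have h1s : 0 < 1 - s := by linarith [hs.2]
    have hpow : (0:ℝ) < (1-s) ^ γ := Real.rpow_pos_of_pos h1s γ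
    have hchain : (1-s) ^ γ * (1 / (4 * (1 - s))) ≤ C * 2 :=
      le_trans (mul_le_mul_of_nonneg_left hI hpow.le) hH
    have heq : (1-s) ^ (γ-1) = (1-s) ^ γ / (1-s) := by
      rw [Real.rpow_sub h1s, Real.rpow_one]
    rw [mul_one_div, div_le_iff₀ (by positivity : (0:ℝ) < 4*(1-s))] at hchain
    rw [heq, div_le_iff₀ h1s]
    linarith
  have hδ : γ - 1 < 0 := by linarith
  set b : ℝ := (8*C+1) ^ (1/(γ-1)) with hbdef
  have hb : (0:ℝ) < b := Real.rpow_pos_of_pos (by linarith) _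
  set ε : ℝ := min (1/2) b with hεdef
  have hε0 : 0 < ε := lt_min (by norm_num) hb
  have hε1 : ε ≤ 1/2 := min_le_left _ _
  have hsmem : (1 - ε) ∈ Set.Ioo (0:ℝ) 1 := ⟨by linarith, by linarith⟩
  have h8 := key2 (1-ε) hsmem
  rw [show (1 - (1-ε)) = ε by ring] at h8
  have hmono : b ^ (γ-1) ≤ ε ^ (γ-1) :=
    Real.rpow_le_rpow_of_nonpos hε0 (min_le_right _ _) hδ.le
  have hbval : b ^ (γ-1) = 8*C+1 := by
    rw [hbdef, ← Real.rpow_mul (by linarith : (0:ℝ) ≤ 8*C+1), one_div,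
      inv_mul_cancel₀ (by linarith : γ - 1 ≠ 0), Real.rpow_one]
  linarith

end
end

section
/- Let $k\in\mathbb{N}$, $s\in(0,1)$, and $p,q\in[1,\infty)$ with $n(\frac{1}{p}-\frac{1}{q})\ge k$. Then there exists $f\in C_c^\infty(\mathbb{R}^n)$ (any smooth $f$ with $\mathbf{1}_{B(\mathbf{0},1/2)}\le f\le\mathbf{1}_{B(\mathbf{0},3/2)}$ works) such that $\int_{\mathbb{R}^n}\left(\int_{\mathbb{R}^n}\frac{|\Delta_h^k f(x)|^q}{|h|^{n+skq}}\,dh\right)^{p/q}\,dx=\infty$. -/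
open MeasureTheory Real Set
open scoped Classical ENNReal

noncomputable section

open Paper

/-- Divergence of `∫ ‖x‖^(-β)` outside a ball when `β < n`. -/
lemma div_lemma (n : ℕ) (hn : 0 < n) (β R : ℝ) (hβ0 : 0 < β) (hβ : β < n) (hR : 0 < R) :
    ∫⁻ x in (Metric.closedBall (0 : EuclideanSpace ℝ (Fin n)) R)ᶜ,
      ENNReal.ofReal (‖x‖ ^ (-β)) = ⊤ := by
  set E := EuclideanSpace ℝ (Fin n)
  set S : ℕ → Set E := fun m =>
    Metric.closedBall 0 (R * 2 ^ (m + 1)) \ Metric.closedBall 0 (R * 2 ^ m) with hS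
  have hSmeas : ∀ m, MeasurableSet (S m) := fun m =>
    measurableSet_closedBall.diff measurableSet_closedBall
  have hdisj : Pairwise (Function.onFun Disjoint S) := by
    intro i j hij
    wlog hlt : i < j generalizing i j
    · exact (this hij.symm (by omega)).symm
    refine Set.disjoint_left.2 fun x hxi hxj => ?_
    have h1 : ‖x‖ ≤ R * 2 ^ (i + 1) := by
      simpa [Metric.mem_closedBall] using hxi.1
    have h2 : ¬ ‖x‖ ≤ R * 2 ^ j := by
      simpa [Metric.mem_closedBall] using hxj.2
    exact h2 (h1.trans (by
      have : (2 : ℝ) ^ (i + 1) ≤ 2 ^ j := by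
        apply pow_le_pow_right₀ (by norm_num) (by omega)
      nlinarith))
  have hsub : (⋃ m, S m) ⊆ (Metric.closedBall (0 : E) R)ᶜ := by
    rintro x hx
    obtain ⟨m, hm⟩ := Set.mem_iUnion.1 hx
    have h2 : ¬ ‖x‖ ≤ R * 2 ^ m := by simpa [Metric.mem_closedBall] using hm.2
    simp only [Set.mem_compl_iff, Metric.mem_closedBall, dist_zero_right]
    intro hle
    exact h2 (hle.trans (by nlinarith [one_le_pow₀ (M₀ := ℝ) (a := 2) (n := m) one_le_two]))
  have key : ∀ m : ℕ, ENNReal.ofReal (2 ^ (-β) * (2 ^ n - 1) * R ^ ((n : ℝ) - β)) *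
      volume (Metric.ball (0 : E) 1) ≤ ∫⁻ x in S m, ENNReal.ofReal (‖x‖ ^ (-β)) := by
    intro m
    have hRm : (0 : ℝ) < R * 2 ^ m := by positivity
    have hRm1 : (0 : ℝ) < R * 2 ^ (m + 1) := by positivity
    have hfr : Module.finrank ℝ E = n := finrank_euclideanSpace_fin
    -- pointwise lower bound on S m
    have hpt : ∀ x ∈ S m, ENNReal.ofReal ((R * 2 ^ (m + 1)) ^ (-β)) ≤
        ENNReal.ofReal (‖x‖ ^ (-β)) := by
      intro x hx
      have h1 : ‖x‖ ≤ R * 2 ^ (m + 1) := by simpa [Metric.mem_closedBall] using hx.1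
      have h0 : (0 : ℝ) < ‖x‖ := by
        have h2 : ¬ ‖x‖ ≤ R * 2 ^ m := by simpa [Metric.mem_closedBall] using hx.2
        nlinarith [norm_nonneg x]
      exact ENNReal.ofReal_le_ofReal (by
        rw [Real.rpow_neg hRm1.le, Real.rpow_neg h0.le]
        exact inv_anti₀ (Real.rpow_pos_of_pos h0 β)
          (Real.rpow_le_rpow h0.le h1 hβ0.le))
    calc ENNReal.ofReal (2 ^ (-β) * (2 ^ n - 1) * R ^ ((n : ℝ) - β)) *
          volume (Metric.ball (0 : E) 1)
        ≤ ENNReal.ofReal ((R * 2 ^ (m + 1)) ^ (-β)) * volume (S m) := by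
          have hvol : volume (S m) = ENNReal.ofReal ((R * 2 ^ (m + 1)) ^ n - (R * 2 ^ m) ^ n) *
              volume (Metric.ball (0 : E) 1) := by
            rw [hS]
            rw [measure_diff (Metric.closedBall_subset_closedBall (by
              have h2m : (2:ℝ) ^ (m+1) = 2 * 2 ^ m := by ring
              nlinarith))
              measurableSet_closedBall.nullMeasurableSet measure_closedBall_lt_top.ne,
              Measure.addHaar_closedBall _ _ hRm.le, Measure.addHaar_closedBall _ _ hRm1.le,
              hfr, ← ENNReal.sub_mul (by intro _ _; exact measure_ball_lt_top.ne),
              ← ENNReal.ofReal_sub _ (by positivity)]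
          rw [hvol, ← mul_assoc, ← ENNReal.ofReal_mul (by positivity)]
          apply mul_le_mul_left
          apply ENNReal.ofReal_le_ofReal
          -- real arithmetic
          have t := R * 2 ^ m
          have h2t : R * 2 ^ (m + 1) = 2 * (R * 2 ^ m) := by ring
          rw [h2t]
          have e1 : (2 * (R * 2 ^ m)) ^ (-β) = 2 ^ (-β) * (R * 2 ^ m) ^ (-β) :=
            Real.mul_rpow (by norm_num) hRm.le
          have e2 : (2 * (R * 2 ^ m)) ^ n = 2 ^ n * (R * 2 ^ m) ^ n := by ring
          rw [e1, e2]
          have hun : ((R * 2 ^ m : ℝ)) ^ (n : ℕ) = (R * 2 ^ m) ^ ((n : ℝ)) :=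
            (Real.rpow_natCast _ n).symm
          have h4 : (R * 2 ^ m) ^ (-β) * (R * 2 ^ m) ^ ((n:ℝ)) = (R * 2 ^ m) ^ ((n:ℝ) - β) := by
            rw [← Real.rpow_add hRm]; ring_nf
          have e3 : (R * 2 ^ m) ^ (-β) * ((2:ℝ) ^ n * (R * 2 ^ m) ^ n - (R * 2 ^ m) ^ n)
              = ((2:ℝ) ^ n - 1) * (R * 2 ^ m) ^ ((n : ℝ) - β) := by
            rw [hun]
            linear_combination ((2:ℝ) ^ n - 1) * h4
          calc 2 ^ (-β) * (2 ^ n - 1) * R ^ ((n:ℝ) - β)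
              ≤ 2 ^ (-β) * (2 ^ n - 1) * (R * 2 ^ m) ^ ((n:ℝ) - β) := by
                apply mul_le_mul_of_nonneg_left
                · apply Real.rpow_le_rpow hR.le (by nlinarith [one_le_pow₀ (M₀ := ℝ) (a := 2) (n := m) one_le_two]) (by linarith)
                · have h1 : (1:ℝ) ≤ 2 ^ n := one_le_pow₀ one_le_two
                  have h2 : (0:ℝ) < 2 ^ (-β) := Real.rpow_pos_of_pos two_pos _
                  nlinarith
            _ = 2 ^ (-β) * ((R * 2 ^ m) ^ (-β) * ((2:ℝ) ^ n * (R * 2 ^ m) ^ n - (R * 2 ^ m) ^ n)) := by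
                rw [e3]; ring
            _ = 2 ^ (-β) * (R * 2 ^ m) ^ (-β) * ((2:ℝ) ^ n * (R * 2 ^ m) ^ n - (R * 2 ^ m) ^ n) := by
                ring
      _ = ∫⁻ _ in S m, ENNReal.ofReal ((R * 2 ^ (m + 1)) ^ (-β)) := by
          rw [setLIntegral_const]
      _ ≤ ∫⁻ x in S m, ENNReal.ofReal (‖x‖ ^ (-β)) :=
          setLIntegral_mono' (hSmeas m) hpt
  have hc : ENNReal.ofReal (2 ^ (-β) * (2 ^ n - 1) * R ^ ((n : ℝ) - β)) *
      volume (Metric.ball (0 : E) 1) ≠ 0 := by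
    apply mul_ne_zero
    · have h1 : (1:ℝ) < 2 ^ n := one_lt_pow₀ one_lt_two hn.ne'
      have h2 : (0:ℝ) < 2 ^ (-β) := Real.rpow_pos_of_pos two_pos _
      have h3 : (0:ℝ) < R ^ ((n : ℝ) - β) := Real.rpow_pos_of_pos hR _
      have h4 : (0:ℝ) < 2 ^ n - 1 := by linarith
      exact (ENNReal.ofReal_pos.2 (mul_pos (mul_pos h2 h4) h3)).ne'
    · exact (Metric.measure_ball_pos volume 0 one_pos).ne'
  refine top_unique ?_
  calc (⊤ : ℝ≥0∞) = ∑' _ : ℕ, ENNReal.ofReal (2 ^ (-β) * (2 ^ n - 1) * R ^ ((n : ℝ) - β)) *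
        volume (Metric.ball (0 : E) 1) := (ENNReal.tsum_const_eq_top_of_ne_zero hc).symm
    _ ≤ ∑' m : ℕ, ∫⁻ x in S m, ENNReal.ofReal (‖x‖ ^ (-β)) := ENNReal.tsum_le_tsum key
    _ = ∫⁻ x in ⋃ m, S m, ENNReal.ofReal (‖x‖ ^ (-β)) := (lintegral_iUnion hSmeas hdisj _).symm
    _ ≤ _ := lintegral_mono_set hsub

set_option maxHeartbeats 1000000 in
/-- Proposition 6.3(i): divergence of the global Gagliardo-type seminorm when
`n(1/p - 1/q) ≥ k`, for any bump function between the indicators of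
`B(0,1/2)` and `B(0,3/2)`. -/
theorem statement12 (n k : ℕ) (hn : 0 < n) (hk : 0 < k) (s p q : ℝ)
    (hs : s ∈ Set.Ioo (0 : ℝ) 1) (hp : 1 ≤ p) (hq : 1 ≤ q)
    (hpq : (k : ℝ) ≤ (n : ℝ) * (1 / p - 1 / q)) :
    ∃ f : EuclideanSpace ℝ (Fin n) → ℝ, ContDiff ℝ (⊤ : ℕ∞) f ∧ HasCompactSupport f ∧
      (∀ x, Set.indicator (Metric.ball (0 : EuclideanSpace ℝ (Fin n)) (1 / 2))
          (fun _ => (1 : ℝ)) x ≤ f x ∧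
        f x ≤ Set.indicator (Metric.ball (0 : EuclideanSpace ℝ (Fin n)) (3 / 2))
          (fun _ => (1 : ℝ)) x) ∧
      (∫⁻ x, (∫⁻ h, ENNReal.ofReal
          (|kdiff k f h x| ^ q / ‖h‖ ^ ((n : ℝ) + s * k * q))) ^ (p / q)) = ⊤ := by
  classical
  have hp0 : (0:ℝ) < p := by linarith
  have hq0 : (0:ℝ) < q := by linarith
  have hk0 : (0:ℝ) < k := by exact_mod_cast hk
  have hk1 : (1:ℝ) ≤ k := by exact_mod_cast hk
  have hkne : (k:ℝ) ≠ 0 := hk0.ne'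
  obtain ⟨hs0, hs1⟩ := hs
  let φ : ContDiffBump (0 : EuclideanSpace ℝ (Fin n)) := ⟨1/2, 3/2, by norm_num, by norm_num⟩
  set f : EuclideanSpace ℝ (Fin n) → ℝ := fun x => φ x with hf
  set β : ℝ := (n : ℝ) + s * k * q with hβ
  set γ : ℝ := β * (p / q) with hγ
  have hβ0 : 0 < β := by
    have h1 : (0:ℝ) < n := by exact_mod_cast hn
    have h2 : (0:ℝ) < s * k * q := by positivity
    positivity
  have hγ0 : 0 < γ := by positivity
  have hγn : γ < n := by
    have e : γ = (n:ℝ) * (p / q) + s * k * p := by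
      rw [hγ, hβ]; field_simp
    have h1 : (n:ℝ) * (1 / p - 1 / q) * p = n - n * (p/q) := by
      field_simp
    have h2 : (k:ℝ) * p ≤ n - n * (p/q) := by
      rw [← h1]
      have := mul_le_mul_of_nonneg_right hpq hp0.le
      linarith
    have h3 : s * (k:ℝ) * p < k * p := by nlinarith [mul_pos hk0 hp0, mul_pos (mul_pos hk0 hp0) (show (0:ℝ) < 1 - s by linarith)]
    rw [e]; linarith
  set V : ℝ≥0∞ := volume (Metric.ball (0 : EuclideanSpace ℝ (Fin n)) (1/(2*k))) with hV
  have hV0 : V ≠ 0 := (Metric.measure_ball_pos volume 0 (by positivity)).ne'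
  have hVt : V ≠ ⊤ := measure_ball_lt_top.ne
  have hpq0 : (0:ℝ) ≤ p / q := by positivity
  set c' : ℝ≥0∞ := ENNReal.ofReal ((k/2) ^ γ) * V ^ (p/q) with hc'
  have hc'0 : c' ≠ 0 := by
    apply mul_ne_zero
    · exact (ENNReal.ofReal_pos.2 (Real.rpow_pos_of_pos (by positivity) _)).ne'
    · simp [ENNReal.rpow_eq_zero_iff, hV0, hVt]
  have hc't : c' ≠ ⊤ := by
    apply ENNReal.mul_ne_top ENNReal.ofReal_ne_top
    exact ENNReal.rpow_ne_top_of_nonneg hpq0 hVt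
  refine ⟨f, φ.contDiff, φ.hasCompactSupport, ?_, ?_⟩
  · intro x
    constructor
    · by_cases hx : x ∈ Metric.ball (0 : EuclideanSpace ℝ (Fin n)) (1/2)
      · rw [Set.indicator_of_mem hx]
        exact (φ.one_of_mem_closedBall (Metric.ball_subset_closedBall hx)).ge
      · rw [Set.indicator_of_notMem hx]; exact φ.nonneg
    · by_cases hx : x ∈ Metric.ball (0 : EuclideanSpace ℝ (Fin n)) (3/2)
      · rw [Set.indicator_of_mem hx]; exact φ.le_one
      · rw [Set.indicator_of_notMem hx]
        exact le_of_eq (φ.zero_of_le_dist (by simpa [Metric.mem_ball] using hx))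
  -- main divergence
  set A : Set (EuclideanSpace ℝ (Fin n)) :=
    (Metric.closedBall (0 : EuclideanSpace ℝ (Fin n)) (2*k))ᶜ with hA
  have main : ∀ x ∈ A, c' * ENNReal.ofReal (‖x‖ ^ (-γ)) ≤
      (∫⁻ h, ENNReal.ofReal (|kdiff k f h x| ^ q / ‖h‖ ^ β)) ^ (p/q) := by
    intro x hxA
    have hx : 2 * (k:ℝ) < ‖x‖ := by
      have := (Set.mem_compl_iff _ _).1 hxA
      rw [Metric.mem_closedBall, dist_zero_right, not_le] at this
      exact this
    have hx0 : (0:ℝ) < ‖x‖ := by linarith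
    set H : Set (EuclideanSpace ℝ (Fin n)) :=
      Metric.ball (-((k:ℝ)⁻¹ • x)) (1/(2*k)) with hH
    -- pointwise on H
    have step1 : ∀ h ∈ H, ENNReal.ofReal ((k/(2*‖x‖)) ^ β) ≤
        ENNReal.ofReal (|kdiff k f h x| ^ q / ‖h‖ ^ β) := by
      intro h hh
      set y : EuclideanSpace ℝ (Fin n) := x + (k:ℝ) • h with hy
      have h1 : ‖h + (k:ℝ)⁻¹ • x‖ < 1/(2*k) := by
        have := Metric.mem_ball.1 hh
        rwa [dist_eq_norm, sub_neg_eq_add] at this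
      have hynorm : ‖y‖ < 1/2 := by
        have h2 : y = (k:ℝ) • (h + (k:ℝ)⁻¹ • x) := by
          rw [smul_add, smul_smul, mul_inv_cancel₀ hkne, one_smul, add_comm]
        rw [h2, norm_smul, Real.norm_eq_abs, abs_of_pos hk0]
        calc (k:ℝ) * ‖h + (k:ℝ)⁻¹ • x‖ < k * (1/(2*k)) :=
              mul_lt_mul_of_pos_left h1 hk0
          _ = 1/2 := by field_simp
      have hymem : y ∈ Metric.closedBall (0 : EuclideanSpace ℝ (Fin n)) (1/2) := by
        rw [Metric.mem_closedBall, dist_zero_right]; linarith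
      have hkh : (k:ℝ) * ‖h‖ ≤ 2 * ‖x‖ := by
        have h1' : ‖(k:ℝ) • h‖ = ‖y - x‖ := by rw [hy]; congr 1; abel
        have h2' : ‖y - x‖ ≤ ‖y‖ + ‖x‖ := norm_sub_le _ _
        rw [norm_smul, Real.norm_eq_abs, abs_of_pos hk0] at h1'
        nlinarith
      have hh0 : (0:ℝ) < ‖h‖ := by
        rcases eq_or_ne h 0 with rfl | hne
        · exfalso
          have hyx : y = x := by rw [hy]; simp
          rw [hyx] at hynorm; linarith
        · exact norm_pos_iff.2 hne
      -- kdiff = 1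
      have hkd : kdiff k f h x = 1 := by
        rw [kdiff]
        rw [Finset.sum_eq_single_of_mem k (Finset.self_mem_range_succ k)]
        · have hfy : f (x + k • h) = 1 := by
            apply φ.one_of_mem_closedBall
            have hxy : x + k • h = y := by rw [hy, Nat.cast_smul_eq_nsmul]
            rw [hxy]; exact hymem
          simp [hfy]
        · intro j hj hjk
          have hjk' : j < k := by
            have := Finset.mem_range.1 hj; omega
          have hfz : f (x + j • h) = 0 := by
            apply φ.zero_of_le_dist
            set t : ℝ := (j:ℝ)/k with ht
            have htk : t * k = j := by rw [ht]; field_simp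
            have h0t : 0 ≤ t := by positivity
            have ht1 : t ≤ 1 := by
              rw [ht, div_le_one hk0]; exact_mod_cast hjk'.le
            have hjle : (j:ℝ) ≤ (k:ℝ) - 1 := by
              have : (j:ℝ) + 1 ≤ k := by exact_mod_cast hjk'
              linarith
            have hid : x + j • h = (1 - t) • x + t • y := by
              rw [← Nat.cast_smul_eq_nsmul ℝ j h]
              rw [hy, smul_add, smul_smul, sub_smul, one_smul, htk]
              abel
            have hnorm : (1-t) * ‖x‖ - t * ‖y‖ ≤ ‖(1 - t) • x + t • y‖ := by
              have h1' := norm_sub_norm_le ((1-t) • x) (-(t • y))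
              rw [norm_neg, sub_neg_eq_add] at h1'
              rw [norm_smul, norm_smul, Real.norm_eq_abs, Real.norm_eq_abs,
                abs_of_nonneg (by linarith : (0:ℝ) ≤ 1 - t), abs_of_nonneg h0t] at h1'
              exact h1'
            have hAx : (1-t) * (2*k) ≤ (1-t) * ‖x‖ :=
              mul_le_mul_of_nonneg_left hx.le (by linarith)
            have hC : (1-t) * (2*(k:ℝ)) = 2*k - 2*j := by
              linear_combination (-2 : ℝ) * htk
            have hB : t * ‖y‖ ≤ 1/2 := by nlinarith [norm_nonneg y]
            rw [hid, dist_zero_right]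
            have h2j : (2:ℝ)*(k:ℝ) - 2*j ≥ 2 := by linarith
            show (3:ℝ)/2 ≤ ‖(1 - t) • x + t • y‖
            linarith
          simp [hfz]
      -- norm quotient bound
      rw [hkd]
      apply ENNReal.ofReal_le_ofReal
      rw [abs_one, Real.one_rpow]
      have hb : k/(2*‖x‖) ≤ 1/‖h‖ := by
        rw [div_le_div_iff₀ (by positivity) hh0]
        nlinarith
      calc (k/(2*‖x‖)) ^ β ≤ (1/‖h‖) ^ β :=
            Real.rpow_le_rpow (by positivity) hb hβ0.le
        _ = 1 / ‖h‖ ^ β := by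
            rw [Real.div_rpow (by norm_num) (norm_nonneg h), Real.one_rpow]
    -- integrate
    have step2 : ENNReal.ofReal ((k/(2*‖x‖)) ^ β) * V ≤
        ∫⁻ h, ENNReal.ofReal (|kdiff k f h x| ^ q / ‖h‖ ^ β) := by
      calc ENNReal.ofReal ((k/(2*‖x‖)) ^ β) * V
          = ∫⁻ _ in H, ENNReal.ofReal ((k/(2*‖x‖)) ^ β) := by
            rw [setLIntegral_const, hH, Measure.addHaar_ball_center]
        _ ≤ ∫⁻ h in H, ENNReal.ofReal (|kdiff k f h x| ^ q / ‖h‖ ^ β) :=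
            setLIntegral_mono' measurableSet_ball step1
        _ ≤ _ := setLIntegral_le_lintegral _ _
    have key3 : c' * ENNReal.ofReal (‖x‖ ^ (-γ))
        = (ENNReal.ofReal ((k/(2*‖x‖)) ^ β) * V) ^ (p/q) := by
      rw [ENNReal.mul_rpow_of_nonneg _ _ hpq0,
        ENNReal.ofReal_rpow_of_pos (Real.rpow_pos_of_pos (by positivity) _)]
      have e1 : ((k/(2*‖x‖)) ^ β) ^ (p/q) = (k/(2*‖x‖)) ^ γ := by
        rw [← Real.rpow_mul (by positivity), hγ]
      have e2 : ((k:ℝ)/(2*‖x‖)) ^ γ = (k/2) ^ γ * ‖x‖ ^ (-γ) := by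
        have : (k:ℝ)/(2*‖x‖) = (k/2)/‖x‖ := by field_simp
        rw [this, Real.div_rpow (by positivity) (norm_nonneg x),
          Real.rpow_neg (norm_nonneg x), div_eq_mul_inv]
      rw [e1, e2, ENNReal.ofReal_mul (by positivity), hc']
      ring
    calc c' * ENNReal.ofReal (‖x‖ ^ (-γ))
        = (ENNReal.ofReal ((k/(2*‖x‖)) ^ β) * V) ^ (p/q) := key3
      _ ≤ _ := ENNReal.rpow_le_rpow step2 hpq0
  have hdiv : ∫⁻ x in A, ENNReal.ofReal (‖x‖ ^ (-γ)) = ⊤ :=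
    div_lemma n hn γ (2*k) hγ0 hγn (by positivity)
  have hAm : MeasurableSet A := measurableSet_closedBall.compl
  refine top_unique ?_
  calc (⊤:ℝ≥0∞) = c' * ∫⁻ x in A, ENNReal.ofReal (‖x‖ ^ (-γ)) := by
        rw [hdiv, ENNReal.mul_top hc'0]
    _ = ∫⁻ x in A, c' * ENNReal.ofReal (‖x‖ ^ (-γ)) :=
        (lintegral_const_mul' c' _ hc't).symm
    _ ≤ ∫⁻ x in A, (∫⁻ h, ENNReal.ofReal (|kdiff k f h x| ^ q / ‖h‖ ^ β)) ^ (p/q) :=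
        setLIntegral_mono' hAm main
    _ ≤ _ := setLIntegral_le_lintegral _ _
end
end

section
/- Let $n\in\mathbb{N}$ and $\delta\in(0,n]$, and define $\omega(x):=|x|^{\delta-n}$ for $x\in\mathbb{R}^n\setminus\{\mathbf{0}\}$. Then $\omega\in A_1$, and there exist positive constants $c_1,c_2$ depending only on $n$ (independent of $\delta$) such that $c_1\delta^{-1}\le[\omega]_{A_1}\le c_2\delta^{-1}$ and $c_1\delta^{-1}\le\omega(B(\mathbf{0},1))\le c_2\delta^{-1}$. -/
open MeasureTheory Real Set
open scoped Classical ENNReal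

noncomputable section
set_option maxHeartbeats 2000000

open Paper

section AuxPW

open Metric

variable {n : ℕ}

theorem lintegral_fun_norm {n : ℕ} (hn : 0 < n) (g : ℝ → ℝ≥0∞) (hg : Measurable g) :
    ∫⁻ x : EuclideanSpace ℝ (Fin n), g ‖x‖ =
      (n : ℝ≥0∞) * volume (ball (0 : EuclideanSpace ℝ (Fin n)) 1) *
        ∫⁻ r in Ioi (0:ℝ), ENNReal.ofReal (r ^ (n - 1)) * g r := by
  haveI : Nonempty (Fin n) := ⟨⟨0, hn⟩⟩
  haveI : Nontrivial (EuclideanSpace ℝ (Fin n)) := by infer_instance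
  set μ : Measure (EuclideanSpace ℝ (Fin n)) := volume with hμ
  have hd : Module.finrank ℝ (EuclideanSpace ℝ (Fin n)) = n := by
    simp [finrank_euclideanSpace]
  have hmeas2 : Measurable fun p : sphere (0 : EuclideanSpace ℝ (Fin n)) 1 × Ioi (0:ℝ) =>
      g p.2 := hg.comp (measurable_subtype_coe.comp measurable_snd)
  calc ∫⁻ x, g ‖x‖ ∂μ = ∫⁻ x in ({0}ᶜ : Set (EuclideanSpace ℝ (Fin n))), g ‖x‖ ∂μ := by
        rw [MeasureTheory.restrict_compl_singleton]
    _ = ∫⁻ x : ({0}ᶜ : Set (EuclideanSpace ℝ (Fin n))), g ‖x.1‖ ∂(μ.comap (↑)) :=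
        (lintegral_subtype_comap (measurableSet_singleton _).compl _).symm
    _ = ∫⁻ p : sphere (0 : EuclideanSpace ℝ (Fin n)) 1 × Ioi (0:ℝ), g p.2
          ∂(μ.toSphere.prod (.volumeIoiPow (Module.finrank ℝ (EuclideanSpace ℝ (Fin n)) - 1))) := by
        rw [← (μ.measurePreserving_homeomorphUnitSphereProd).lintegral_comp hmeas2]
        simp only [homeomorphUnitSphereProd_apply_snd_coe]
    _ = μ.toSphere univ * ∫⁻ r : Ioi (0:ℝ), g r
          ∂(Measure.volumeIoiPow (Module.finrank ℝ (EuclideanSpace ℝ (Fin n)) - 1)) := by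
        rw [lintegral_prod _ hmeas2.aemeasurable]
        simp [lintegral_const]
        ring
    _ = (n : ℝ≥0∞) * μ (ball 0 1) * ∫⁻ r in Ioi (0:ℝ), ENNReal.ofReal (r ^ (n - 1)) * g r := by
        rw [Measure.toSphere_apply_univ, Measure.volumeIoiPow,
          lintegral_withDensity_eq_lintegral_mul _
            (by exact (measurable_subtype_coe.pow_const _).ennreal_ofReal)
            (show Measurable fun r : Ioi (0:ℝ) => g ↑r from hg.comp measurable_subtype_coe),
          hd]
        simp only [Pi.mul_apply]
        rw [lintegral_subtype_comap measurableSet_Ioi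
          (fun r => ENNReal.ofReal (r ^ (n - 1)) * g r)]

theorem lint_ball {n : ℕ} (hn : 0 < n) {δ R : ℝ} (hδ : 0 < δ) (hR : 0 < R) :
    ∫⁻ x in ball (0 : EuclideanSpace ℝ (Fin n)) R, ENNReal.ofReal (‖x‖ ^ (δ - n)) =
      (n : ℝ≥0∞) * volume (ball (0 : EuclideanSpace ℝ (Fin n)) 1) *
        ENNReal.ofReal (R ^ δ / δ) := by
  set g : ℝ → ℝ≥0∞ := (Iio R).indicator (fun r => ENNReal.ofReal (r ^ (δ - ↑n))) with hg
  have hgm : Measurable g := ((by fun_prop : Measurable fun r : ℝ => r ^ (δ - (n:ℝ))).ennreal_ofReal).indicator measurableSet_Iio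
  have h1 : ∀ x : EuclideanSpace ℝ (Fin n),
      g ‖x‖ = (ball (0 : EuclideanSpace ℝ (Fin n)) R).indicator
        (fun x => ENNReal.ofReal (‖x‖ ^ (δ - ↑n))) x := by
    intro x
    by_cases hx : x ∈ ball (0 : EuclideanSpace ℝ (Fin n)) R
    · rw [indicator_of_mem hx, hg, indicator_of_mem (by simpa [mem_ball_zero_iff] using hx)]
    · rw [indicator_of_notMem hx, hg,
        indicator_of_notMem (by simpa [mem_ball_zero_iff] using hx)]
  have h2 : ∫⁻ r in Ioi (0:ℝ), ENNReal.ofReal (r ^ (n - 1)) * g r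
      = ENNReal.ofReal (R ^ δ / δ) := by
    have : ∀ r : ℝ, ENNReal.ofReal (r ^ (n - 1)) * g r
        = (Iio R).indicator (fun r => ENNReal.ofReal (r ^ (n - 1)) * ENNReal.ofReal (r ^ (δ - ↑n))) r := by
      intro r
      by_cases hr : r ∈ Iio R
      · rw [hg, indicator_of_mem hr, indicator_of_mem hr]
      · rw [hg, indicator_of_notMem hr, indicator_of_notMem hr, mul_zero]
    rw [lintegral_congr this, lintegral_indicator measurableSet_Iio _,
      Measure.restrict_restrict measurableSet_Iio]
    have hinter : Iio R ∩ Ioi (0:ℝ) = Ioo 0 R := by ext r; simp [mem_Ioo, and_comm]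
    rw [hinter]
    have h3 : ∀ r ∈ Ioo (0:ℝ) R,
        ENNReal.ofReal (r ^ (n - 1)) * ENNReal.ofReal (r ^ (δ - ↑n))
          = ENNReal.ofReal (r ^ (δ - 1)) := by
      intro r hr
      rw [← ENNReal.ofReal_mul (pow_nonneg hr.1.le _)]
      congr 1
      rw [← Real.rpow_natCast r (n-1), ← Real.rpow_add hr.1]
      congr 1
      have : ((n - 1 : ℕ) : ℝ) = (n : ℝ) - 1 := by
        have : (1:ℕ) ≤ n := hn
        push_cast [this]
        ring
      rw [this]; ring
    rw [setLIntegral_congr_fun measurableSet_Ioo h3]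
    have hint : IntegrableOn (fun r : ℝ => r ^ (δ - 1)) (Ioo 0 R) := by
      have := (intervalIntegral.intervalIntegrable_rpow' (a := 0) (b := R)
        (r := δ - 1) (by linarith)).1
      exact this.mono_set Ioo_subset_Ioc_self
    rw [← ofReal_integral_eq_lintegral_ofReal hint]
    · congr 1
      rw [Measure.restrict_congr_set Ioo_ae_eq_Ioc, ← intervalIntegral.integral_of_le hR.le,
        integral_rpow (Or.inl (by linarith))]
      rw [Real.zero_rpow (by linarith : δ - 1 + 1 ≠ 0)]
      rw [show δ - 1 + 1 = δ by ring]
      ring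
    · filter_upwards [ae_restrict_mem measurableSet_Ioo] with r hr
      exact Real.rpow_nonneg hr.1.le _
  calc ∫⁻ x in ball (0 : EuclideanSpace ℝ (Fin n)) R, ENNReal.ofReal (‖x‖ ^ (δ - ↑n))
      = ∫⁻ x : EuclideanSpace ℝ (Fin n), g ‖x‖ := by
        rw [funext h1, lintegral_indicator measurableSet_ball _]
    _ = _ := by rw [lintegral_fun_norm hn g hgm, h2]

theorem intOn_ball {n : ℕ} (hn : 0 < n) {δ R : ℝ} (hδ : 0 < δ) (hR : 0 < R) :
    IntegrableOn (fun x : EuclideanSpace ℝ (Fin n) => ‖x‖ ^ (δ - n)) (ball 0 R) := by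
  constructor
  · exact ((by fun_prop : Measurable fun x : EuclideanSpace ℝ (Fin n) =>
      ‖x‖ ^ (δ - (n:ℝ))).aestronglyMeasurable)
  · rw [hasFiniteIntegral_iff_ofReal (by
      filter_upwards with x using Real.rpow_nonneg (norm_nonneg _) _)]
    rw [lint_ball hn hδ hR]
    exact ENNReal.mul_lt_top (ENNReal.mul_lt_top (ENNReal.natCast_lt_top _) measure_ball_lt_top)
      ENNReal.ofReal_lt_top

theorem integral_ball {n : ℕ} (hn : 0 < n) {δ R : ℝ} (hδ : 0 < δ) (hR : 0 < R) :
    ∫ x in ball (0 : EuclideanSpace ℝ (Fin n)) R, ‖x‖ ^ (δ - n) =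
      (n : ℝ) * (volume (ball (0 : EuclideanSpace ℝ (Fin n)) 1)).toReal * (R ^ δ / δ) := by
  rw [integral_eq_lintegral_of_nonneg_ae
      (by filter_upwards with x using Real.rpow_nonneg (norm_nonneg _) _)
      ((by fun_prop : Measurable fun x : EuclideanSpace ℝ (Fin n) =>
        ‖x‖ ^ (δ - (n:ℝ))).aestronglyMeasurable),
    lint_ball hn hδ hR, ENNReal.toReal_mul, ENNReal.toReal_mul, ENNReal.toReal_natCast,
    ENNReal.toReal_ofReal (by positivity)]

def cube (a : EuclideanSpace ℝ (Fin n)) (l : ℝ) : Set (EuclideanSpace ℝ (Fin n)) :=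
  {x | ∀ i, x i ∈ Set.Ico (a i) (a i + l)}

theorem cube_eq_preimage (a : EuclideanSpace ℝ (Fin n)) (l : ℝ) :
    cube a l = (MeasurableEquiv.toLp 2 (Fin n → ℝ)).symm ⁻¹'
      (Set.univ.pi fun i => Set.Ico (a i) (a i + l)) := by
  ext x; simp [cube, Set.mem_pi]

theorem cube_measurable (a : EuclideanSpace ℝ (Fin n)) (l : ℝ) :
    MeasurableSet (cube a l) := by
  rw [cube_eq_preimage]
  exact (MeasurableSet.univ_pi fun i => measurableSet_Ico).preimage
    (MeasurableEquiv.toLp 2 (Fin n → ℝ)).symm.measurable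

theorem cube_volume (a : EuclideanSpace ℝ (Fin n)) (l : ℝ) :
    volume (cube a l) = ENNReal.ofReal l ^ n := by
  rw [cube_eq_preimage,
    (EuclideanSpace.volume_preserving_symm_measurableEquiv_toLp (Fin n)).measure_preimage
      (MeasurableSet.univ_pi fun i => measurableSet_Ico).nullMeasurableSet,
    volume_pi_pi]
  simp [Real.volume_Ico]

def cubeCenter (a : EuclideanSpace ℝ (Fin n)) (l : ℝ) : EuclideanSpace ℝ (Fin n) :=
  WithLp.toLp 2 (fun i => a i + l / 2)

theorem cube_dist (a : EuclideanSpace ℝ (Fin n)) {l : ℝ} (hl : 0 < l)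
    {x : EuclideanSpace ℝ (Fin n)} (hx : x ∈ cube a l) :
    ‖x - cubeCenter a l‖ ≤ Real.sqrt n * (l / 2) := by
  set c : EuclideanSpace ℝ (Fin n) := cubeCenter a l with hc
  have h : ∀ i, ‖(x - c) i‖ ≤ l / 2 := by
    intro i
    have h1 := (hx i).1
    have h2 := (hx i).2
    have : (x - c) i = x i - c i := by simp
    rw [this, Real.norm_eq_abs, abs_le]
    constructor <;> simp only [c, hc, cubeCenter, PiLp.toLp_apply] <;> nlinarith
  rw [EuclideanSpace.norm_eq]
  calc Real.sqrt (∑ i, ‖(x - c) i‖ ^ 2) ≤ Real.sqrt (∑ _i : Fin n, (l/2)^2) := by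
        apply Real.sqrt_le_sqrt
        apply Finset.sum_le_sum
        intro i _
        have := h i
        nlinarith [norm_nonneg ((x - c) i)]
    _ = Real.sqrt n * (l / 2) := by
        rw [Finset.sum_const, Finset.card_univ, Fintype.card_fin, nsmul_eq_mul,
          Real.sqrt_mul (by positivity), Real.sqrt_sq (by positivity)]

theorem memA1_main (hn : 0 < n) {δ : ℝ} (hδ : 0 < δ) (hδn : δ ≤ n)
    (a : EuclideanSpace ℝ (Fin n)) {l : ℝ} (hl : 0 < l) :
    ∀ᵐ y ∂(volume.restrict (cube a l)),
      (⨍ x in cube a l, ‖x‖ ^ (δ - n)) ≤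
        (((3:ℝ)^n * n + (n * (volume (ball (0 : EuclideanSpace ℝ (Fin n)) 1)).toReal)
            * (2 * Real.sqrt n)^n
          + n * (volume (ball (0 : EuclideanSpace ℝ (Fin n)) 1)).toReal) / δ) * ‖y‖ ^ (δ - n) := by
  set ω : EuclideanSpace ℝ (Fin n) → ℝ := fun x => ‖x‖ ^ (δ - n) with hω
  set K : ℝ := n * (volume (ball (0 : EuclideanSpace ℝ (Fin n)) 1)).toReal with hK
  set C₂ : ℝ := (3:ℝ)^n * n + K * (2 * Real.sqrt n)^n + K with hC
  have hKpos : 0 < K := by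
    apply mul_pos (by exact_mod_cast hn)
    exact ENNReal.toReal_pos (measure_ball_pos _ _ one_pos).ne' measure_ball_lt_top.ne
  have hsn : 0 < Real.sqrt n := Real.sqrt_pos.mpr (by exact_mod_cast hn)
  have hωnn : ∀ x, 0 ≤ ω x := fun x => Real.rpow_nonneg (norm_nonneg _) _
  have hen : δ - (n:ℝ) ≤ 0 := by linarith
  haveI : Nonempty (Fin n) := ⟨⟨0, hn⟩⟩
  haveI : Nontrivial (EuclideanSpace ℝ (Fin n)) := inferInstance
  have hC₂nn : 0 ≤ C₂ := by rw [hC, hK]; positivity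
  -- basic cube data
  set Q := cube a l
  set c := cubeCenter a l
  set r := ‖c‖ with hr
  set s := Real.sqrt n * (l / 2) with hs
  have hspos : 0 < s := by positivity
  have hxub : ∀ x ∈ Q, ‖x‖ ≤ r + s := by
    intro x hx
    calc ‖x‖ = ‖c + (x - c)‖ := by congr 1; abel
      _ ≤ ‖c‖ + ‖x - c‖ := norm_add_le _ _
      _ ≤ r + s := by gcongr; exact cube_dist a hl hx
  have hxlb : ∀ x ∈ Q, r - s ≤ ‖x‖ := by
    intro x hx
    have h1 : ‖c‖ - ‖x - c‖ ≤ ‖x‖ := by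
      have := norm_sub_norm_le c x
      have h2 : ‖c - x‖ = ‖x - c‖ := norm_sub_rev _ _
      linarith [norm_sub_norm_le c x, h2 ▸ this]
    linarith [cube_dist a hl hx]
  have hQvol : (volume Q).toReal = l ^ n := by
    rw [show Q = cube a l from rfl, cube_volume]
    rw [← ENNReal.ofReal_pow hl.le, ENNReal.toReal_ofReal (by positivity)]
  have hQvolpos : 0 < (volume Q).toReal := by rw [hQvol]; positivity
  have hQball : Q ⊆ ball 0 (r + s + 1) := by
    intro x hx
    rw [mem_ball_zero_iff]
    have := hxub x hx
    linarith
  have hQint : IntegrableOn ω Q := by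
    apply (intOn_ball hn hδ (R := r + s + 1) (by positivity)).mono_set hQball
  have havg : (⨍ x in Q, ω x) = (volume Q).toReal⁻¹ * ∫ x in Q, ω x := by
    rw [setAverage_eq]; simp [smul_eq_mul, measureReal_def]
  -- main case split
  rcases le_or_gt (2 * s) r with hcase | hcase
  · -- far case
    have hrpos : 0 < r := by linarith
    have h2 : 0 < r / 2 := by linarith
    have hub : ∀ x ∈ Q, ω x ≤ (r/2) ^ (δ - n) := by
      intro x hx
      exact Real.rpow_le_rpow_of_nonpos h2 (by linarith [hxlb x hx]) hen
    have hQfin : volume Q < ⊤ := by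
      rw [show Q = cube a l from rfl, cube_volume]
      exact ENNReal.pow_lt_top ENNReal.ofReal_lt_top
    have hint : ∫ x in Q, ω x ≤ (volume Q).toReal * ((r/2) ^ (δ - (n:ℝ))) := by
      have h := setIntegral_mono_on hQint
        (integrableOn_const hQfin.ne) (cube_measurable a l) hub
      rwa [setIntegral_const, smul_eq_mul] at h
    have key : ∀ y ∈ Q, (⨍ x in Q, ω x) ≤ (C₂ / δ) * ω y := by
      intro y hy
      have h3 : (r/2) ^ (δ - (n:ℝ)) ≤ 3^n * (r + s) ^ (δ - (n:ℝ)) := by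
        have e1 : ((3:ℝ) * (r/2)) ^ (δ - (n:ℝ)) = 3 ^ (δ - (n:ℝ)) * (r/2) ^ (δ - (n:ℝ)) :=
          Real.mul_rpow (by norm_num) h2.le
        have e2 : ((3:ℝ) * (r/2)) ^ (δ - (n:ℝ)) ≤ (r + s) ^ (δ - (n:ℝ)) := by
          apply Real.rpow_le_rpow_of_nonpos (by linarith) (by linarith) hen
        have e3 : (r/2) ^ (δ - (n:ℝ)) = (3:ℝ) ^ ((n:ℝ) - δ) * ((3:ℝ) * (r/2)) ^ (δ - (n:ℝ)) := by
          rw [e1, ← mul_assoc, ← Real.rpow_add (by norm_num : (0:ℝ) < 3)]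
          norm_num
        rw [e3]
        have e4 : (3:ℝ) ^ ((n:ℝ) - δ) ≤ 3^n := by
          rw [← Real.rpow_natCast 3 n]
          exact Real.rpow_le_rpow_of_exponent_le (by norm_num) (by linarith)
        have e5 : 0 ≤ ((3:ℝ) * (r/2)) ^ (δ - (n:ℝ)) := Real.rpow_nonneg (by linarith) _
        calc (3:ℝ) ^ ((n:ℝ) - δ) * ((3:ℝ) * (r/2)) ^ (δ - (n:ℝ))
            ≤ 3^n * ((3:ℝ) * (r/2)) ^ (δ - (n:ℝ)) := by gcongr
          _ ≤ 3^n * (r + s) ^ (δ - (n:ℝ)) := mul_le_mul_of_nonneg_left e2 (by positivity)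
      have h4 : (r + s) ^ (δ - (n:ℝ)) ≤ ω y := by
        apply Real.rpow_le_rpow_of_nonpos _ (hxub y hy) hen
        have := hxlb y hy; linarith
      have h5 : (⨍ x in Q, ω x) ≤ (r/2) ^ (δ - (n:ℝ)) := by
        rw [havg, inv_mul_le_iff₀ hQvolpos]
        linarith [hint]
      have h6 : (3:ℝ)^n ≤ C₂ / δ := by
        rw [le_div_iff₀ hδ, hC]
        have : (3:ℝ)^n * δ ≤ 3^n * n := by
          apply mul_le_mul_of_nonneg_left hδn (by positivity)
        nlinarith [mul_nonneg (hKpos.le) (pow_nonneg (by positivity : (0:ℝ) ≤ 2 * Real.sqrt n) n), hKpos.le]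
      calc (⨍ x in Q, ω x) ≤ (r/2) ^ (δ - (n:ℝ)) := h5
        _ ≤ 3^n * (r + s) ^ (δ - (n:ℝ)) := h3
        _ ≤ 3^n * ω y := by gcongr
        _ ≤ (C₂ / δ) * ω y := by
            apply mul_le_mul_of_nonneg_right h6 (hωnn y)
    filter_upwards [ae_restrict_mem (cube_measurable a l)] with y hy
    exact key y hy
  · -- near case
    set R := 2 * Real.sqrt n * l with hR
    have hRpos : 0 < R := by positivity
    have hrs : r + s < R := by
      have : s = Real.sqrt n * (l/2) := hs
      nlinarith
    have hQball' : Q ⊆ ball 0 R := by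
      intro x hx
      rw [mem_ball_zero_iff]
      exact lt_of_le_of_lt (hxub x hx) hrs
    have hint : ∫ x in Q, ω x ≤ K * (R ^ δ / δ) := by
      have h := setIntegral_mono_set (intOn_ball hn hδ hRpos)
        (Filter.Eventually.of_forall hωnn) (HasSubset.Subset.eventuallyLE hQball')
      rw [integral_ball hn hδ hRpos] at h
      exact h.trans_eq (by rw [hK])
    have key : ∀ y ∈ Q, y ≠ 0 → (⨍ x in Q, ω x) ≤ (C₂ / δ) * ω y := by
      intro y hy hy0
      have hy0' : 0 < ‖y‖ := norm_pos_iff.mpr hy0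
      have hyR : ‖y‖ ≤ R := le_of_lt (lt_of_le_of_lt (hxub y hy) hrs)
      have h4 : R ^ (δ - (n:ℝ)) ≤ ω y := Real.rpow_le_rpow_of_nonpos hy0' hyR hen
      have hRsplit : R ^ δ = R ^ (n:ℝ) * R ^ (δ - (n:ℝ)) := by
        rw [← Real.rpow_add hRpos]; ring_nf
      have hRn : R ^ (n:ℝ) = (2 * Real.sqrt n)^n * l^n := by
        rw [Real.rpow_natCast, hR, mul_pow]
      have h5 : (⨍ x in Q, ω x) ≤ (l^n)⁻¹ * (K * (R ^ δ / δ)) := by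
        rw [havg, hQvol]
        apply mul_le_mul_of_nonneg_left hint (by positivity)
      have h6 : (l^n)⁻¹ * (K * (R ^ δ / δ))
          = (K * (2 * Real.sqrt n)^n / δ) * R ^ (δ - (n:ℝ)) := by
        rw [hRsplit, hRn]
        field_simp
      have h7 : K * (2 * Real.sqrt n)^n / δ ≤ C₂ / δ := by
        gcongr
        rw [hC]
        nlinarith [hKpos.le, pow_nonneg (by positivity : (0:ℝ) ≤ 3) n,
          (by exact_mod_cast hn : (0:ℝ) < n)]
      calc (⨍ x in Q, ω x) ≤ (l^n)⁻¹ * (K * (R ^ δ / δ)) := h5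
        _ = (K * (2 * Real.sqrt n)^n / δ) * R ^ (δ - (n:ℝ)) := h6
        _ ≤ (C₂ / δ) * R ^ (δ - (n:ℝ)) :=
            mul_le_mul_of_nonneg_right h7 (Real.rpow_nonneg hRpos.le _)
        _ ≤ (C₂ / δ) * ω y :=
            mul_le_mul_of_nonneg_left h4 (div_nonneg hC₂nn hδ.le)
    have h0ae : ∀ᵐ y ∂(volume.restrict Q), y ≠ (0 : EuclideanSpace ℝ (Fin n)) := by
      refine ae_iff.mpr ?_
      have : {y : EuclideanSpace ℝ (Fin n) | ¬ y ≠ 0} = {0} := by ext y; simp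
      rw [this]
      exact le_antisymm ((Measure.restrict_le_self _).trans_eq (measure_singleton 0)) zero_le
    filter_upwards [ae_restrict_mem (cube_measurable a l), h0ae] with y hy hy0
    exact key y hy hy0

theorem coord_le_norm (x : EuclideanSpace ℝ (Fin n)) (i : Fin n) : |x i| ≤ ‖x‖ := by
  rw [EuclideanSpace.norm_eq, ← Real.sqrt_sq_eq_abs]
  apply Real.sqrt_le_sqrt
  have : x i ^ 2 = ‖x i‖ ^ 2 := by rw [Real.norm_eq_abs, sq_abs]
  rw [this]
  exact Finset.single_le_sum (f := fun j => ‖x j‖^2) (fun j _ => by positivity)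
    (Finset.mem_univ i)

theorem a1_lowerbound (hn : 0 < n) {δ : ℝ} (hδ : 0 < δ) (hδn : δ ≤ n) {C : ℝ} (hC0 : 0 ≤ C)
    (h : ∀ᵐ y ∂(volume.restrict (cube (WithLp.toLp 2 (fun _ => -1) : EuclideanSpace ℝ (Fin n)) 2)),
      (⨍ x in cube (WithLp.toLp 2 (fun _ => -1) : EuclideanSpace ℝ (Fin n)) 2, ‖x‖ ^ (δ - n)) ≤
        C * ‖y‖ ^ (δ - n)) :
    ((3:ℝ)/8)^n * ((n:ℝ) * (volume (ball (0 : EuclideanSpace ℝ (Fin n)) 1)).toReal) / δ ≤ C := by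
  set ω : EuclideanSpace ℝ (Fin n) → ℝ := fun x => ‖x‖ ^ (δ - n) with hω
  set K : ℝ := (n : ℝ) * (volume (ball (0 : EuclideanSpace ℝ (Fin n)) 1)).toReal with hK
  have hKpos : 0 < K := by
    apply mul_pos (by exact_mod_cast hn)
    exact ENNReal.toReal_pos (measure_ball_pos _ _ one_pos).ne' measure_ball_lt_top.ne
  set Q₀ : Set (EuclideanSpace ℝ (Fin n)) := cube (WithLp.toLp 2 (fun _ => -1)) 2 with hQ₀
  set S : Set (EuclideanSpace ℝ (Fin n)) := cube (WithLp.toLp 2 (fun _ => 3/4)) (1/4) with hS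
  have hωnn : ∀ x, 0 ≤ ω x := fun x => Real.rpow_nonneg (norm_nonneg _) _
  have hen : δ - (n:ℝ) ≤ 0 := by linarith
  -- ball ⊆ Q₀
  have hball : ball (0 : EuclideanSpace ℝ (Fin n)) 1 ⊆ Q₀ := by
    intro x hx i
    rw [mem_ball_zero_iff] at hx
    have := (coord_le_norm x i).trans hx.le
    rw [abs_le] at this
    constructor
    · show (-1:ℝ) ≤ x i
      linarith [this.1]
    · show x i < -1 + 2
      have : x i < 1 := lt_of_le_of_lt (le_abs_self _) (lt_of_le_of_lt (coord_le_norm x i) hx)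
      linarith
  -- S ⊆ Q₀
  have hSQ : S ⊆ Q₀ := by
    intro y hy i
    have h1 : (3/4:ℝ) ≤ y i := (hy i).1
    have h2 : y i < 3/4 + 1/4 := (hy i).2
    constructor
    · show (-1:ℝ) ≤ y i
      linarith
    · show y i < -1 + 2
      linarith
  -- integrability on Q₀
  have hcc : cubeCenter (WithLp.toLp 2 (fun _ => -1) : EuclideanSpace ℝ (Fin n)) 2 = 0 := by
    ext i; simp [cubeCenter]
  have hQ₀ball : Q₀ ⊆ ball 0 (Real.sqrt n + 1) := by
    intro x hx
    rw [mem_ball_zero_iff]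
    have := cube_dist (WithLp.toLp 2 (fun _ => -1) : EuclideanSpace ℝ (Fin n)) (by norm_num : (0:ℝ) < 2) hx
    rw [hcc, sub_zero] at this
    calc ‖x‖ ≤ Real.sqrt n * (2/2) := this
      _ < Real.sqrt n + 1 := by norm_num
  have hQ₀int : IntegrableOn ω Q₀ := by
    refine (intOn_ball hn hδ (R := Real.sqrt n + 1) ?_).mono_set hQ₀ball
    positivity
  -- average lower bound
  have hQ₀vol : (volume Q₀).toReal = 2^n := by
    rw [hQ₀, cube_volume, ← ENNReal.ofReal_pow (by norm_num), ENNReal.toReal_ofReal (by positivity)]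
  have hintlb : K * (1/δ) ≤ ∫ x in Q₀, ω x := by
    have h1 := setIntegral_mono_set hQ₀int (Filter.Eventually.of_forall hωnn)
      (HasSubset.Subset.eventuallyLE hball)
    rw [integral_ball hn hδ one_pos, Real.one_rpow] at h1
    exact le_trans (le_of_eq (by rw [hK])) h1
  have havg : (⨍ x in Q₀, ω x) = (volume Q₀).toReal⁻¹ * ∫ x in Q₀, ω x := by
    rw [setAverage_eq]; simp [smul_eq_mul, measureReal_def]
  have havglb : ((2:ℝ)^n)⁻¹ * (K * (1/δ)) ≤ ⨍ x in Q₀, ω x := by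
    rw [havg, hQ₀vol]
    apply mul_le_mul_of_nonneg_left hintlb (by positivity)
  -- pick a good point in S
  have hμS : volume.restrict Q₀ S ≠ 0 := by
    rw [Measure.restrict_apply (cube_measurable _ _), inter_eq_left.mpr hSQ, hS, cube_volume]
    exact pow_ne_zero _ (by simp)
  obtain ⟨y, hyS, hy⟩ : ∃ y ∈ S, (⨍ x in Q₀, ω x) ≤ C * ω y := by
    by_contra hcon
    push_neg at hcon
    refine hμS (measure_mono_null (fun y hy => ?_) (ae_iff.mp h))
    exact not_le.mpr (hcon y hy)
  -- ω y ≤ (4/3)^n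
  have hylb : (3/4 : ℝ) ≤ ‖y‖ := by
    have h1 := (hyS ⟨0, hn⟩).1
    calc (3/4 : ℝ) ≤ y ⟨0, hn⟩ := h1
      _ ≤ |y ⟨0, hn⟩| := le_abs_self _
      _ ≤ ‖y‖ := coord_le_norm y _
  have hωy : ω y ≤ (4/3 : ℝ)^n := by
    rcases le_or_gt 1 ‖y‖ with h1 | h1
    · calc ω y ≤ 1 := Real.rpow_le_one_of_one_le_of_nonpos h1 hen
        _ ≤ (4/3 : ℝ)^n := one_le_pow₀ (by norm_num)
    · calc ω y ≤ (3/4 : ℝ) ^ (δ - (n:ℝ)) :=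
            Real.rpow_le_rpow_of_nonpos (by norm_num) hylb hen
        _ ≤ (3/4 : ℝ) ^ (-(n:ℝ)) :=
            Real.rpow_le_rpow_of_exponent_ge (by norm_num) (by norm_num) (by linarith)
        _ = (4/3 : ℝ)^n := by
            rw [Real.rpow_neg (by norm_num), Real.rpow_natCast, ← inv_pow]
            norm_num
  -- conclude
  have e : (3/4:ℝ)^n * (4/3:ℝ)^n = 1 := by rw [← mul_pow]; norm_num
  have h9 : (3/4:ℝ)^n * ((2:ℝ)^n)⁻¹ * (K * (1/δ)) ≤ C := by
    have h10 : (3/4:ℝ)^n * (⨍ x in Q₀, ω x) ≤ (3/4:ℝ)^n * (C * (4/3:ℝ)^n) := by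
      apply mul_le_mul_of_nonneg_left _ (by positivity)
      calc (⨍ x in Q₀, ω x) ≤ C * ω y := hy
        _ ≤ C * (4/3:ℝ)^n := mul_le_mul_of_nonneg_left hωy hC0
    have h11 : (3/4:ℝ)^n * (C * (4/3:ℝ)^n) = C := by
      rw [mul_comm C, ← mul_assoc, e, one_mul]
    have h12 : (3/4:ℝ)^n * (((2:ℝ)^n)⁻¹ * (K * (1/δ))) ≤ (3/4:ℝ)^n * (⨍ x in Q₀, ω x) :=
      mul_le_mul_of_nonneg_left havglb (by positivity)
    calc (3/4:ℝ)^n * ((2:ℝ)^n)⁻¹ * (K * (1/δ))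
        = (3/4:ℝ)^n * (((2:ℝ)^n)⁻¹ * (K * (1/δ))) := by ring
      _ ≤ (3/4:ℝ)^n * (⨍ x in Q₀, ω x) := h12
      _ ≤ (3/4:ℝ)^n * (C * (4/3:ℝ)^n) := h10
      _ = C := h11
  calc ((3:ℝ)/8)^n * K / δ = (3/4:ℝ)^n * ((2:ℝ)^n)⁻¹ * (K * (1/δ)) := by
        rw [← inv_pow, ← mul_pow]
        norm_num
        ring
    _ ≤ C := h9

end AuxPW


/-- Power weights `|x|^{δ-n}` with `δ ∈ (0, n]` are `A₁` weights with
`[ω]_{A₁} ∼ δ⁻¹` and `ω(B(0,1)) ∼ δ⁻¹`, uniformly in `δ`. -/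
theorem statement15 (n : ℕ) (hn : 0 < n) :
    ∃ c₁ : ℝ, 0 < c₁ ∧ ∃ c₂ : ℝ, 0 < c₂ ∧ ∀ δ ∈ Set.Ioc (0 : ℝ) (n : ℝ),
      IsA1 (fun x : EuclideanSpace ℝ (Fin n) => ‖x‖ ^ (δ - n)) ∧
      c₁ * δ⁻¹ ≤ A1const (fun x : EuclideanSpace ℝ (Fin n) => ‖x‖ ^ (δ - n)) ∧
      A1const (fun x : EuclideanSpace ℝ (Fin n) => ‖x‖ ^ (δ - n)) ≤ c₂ * δ⁻¹ ∧
      c₁ * δ⁻¹ ≤ (∫ x in Metric.ball (0 : EuclideanSpace ℝ (Fin n)) 1, ‖x‖ ^ (δ - n)) ∧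
      (∫ x in Metric.ball (0 : EuclideanSpace ℝ (Fin n)) 1, ‖x‖ ^ (δ - n)) ≤ c₂ * δ⁻¹ := by
  classical
  set volB : ℝ := (volume (Metric.ball (0 : EuclideanSpace ℝ (Fin n)) 1)).toReal with hvolB
  set K : ℝ := n * volB with hK
  have hKpos : 0 < K := mul_pos (by exact_mod_cast hn)
    (ENNReal.toReal_pos (Metric.measure_ball_pos _ _ one_pos).ne' measure_ball_lt_top.ne)
  set c₁ : ℝ := (3/8 : ℝ)^n * K with hc₁
  set c₂ : ℝ := (3:ℝ)^n * n + K * (2 * Real.sqrt n)^n + K with hc₂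
  have hc₁pos : 0 < c₁ := by rw [hc₁]; positivity
  have hc₂aux : 0 ≤ (3:ℝ)^n * n + K * (2 * Real.sqrt n)^n := by positivity
  have hc₂pos : 0 < c₂ := by rw [hc₂]; exact add_pos_of_nonneg_of_pos hc₂aux hKpos
  have hc₁K : c₁ ≤ K := by
    rw [hc₁]
    calc (3/8 : ℝ)^n * K ≤ 1 * K :=
          mul_le_mul_of_nonneg_right (pow_le_one₀ (by norm_num) (by norm_num)) hKpos.le
      _ = K := one_mul K
  have hKc₂ : K ≤ c₂ := by rw [hc₂]; linarith [hc₂aux]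
  refine ⟨c₁, hc₁pos, c₂, hc₂pos, ?_⟩
  intro δ hδ
  obtain ⟨hδ0, hδn⟩ := hδ
  set ω : EuclideanSpace ℝ (Fin n) → ℝ := fun x => ‖x‖ ^ (δ - n) with hωdef
  -- A₁ membership with constant c₂ / δ
  have hmemA1 : Paper.MemA1 ω (c₂ / δ) := by
    intro Q hQ
    obtain ⟨a, l, hl, rfl⟩ := hQ
    have := memA1_main hn hδ0 hδn a hl
    rw [hc₂, hK, hvolB]
    exact this
  have hmemAp : Paper.MemAp 1 ω (c₂ / δ) := by
    rw [Paper.MemAp, if_pos rfl]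
    exact hmemA1
  have hmem : (c₂ / δ) ∈ {C : ℝ | 0 ≤ C ∧ Paper.MemAp 1 ω C} :=
    ⟨div_nonneg hc₂pos.le hδ0.le, hmemAp⟩
  have hbdd : BddBelow {C : ℝ | 0 ≤ C ∧ Paper.MemAp 1 ω C} := ⟨0, fun C hC => hC.1⟩
  have hlb : ∀ C ∈ {C : ℝ | 0 ≤ C ∧ Paper.MemAp 1 ω C}, (3/8 : ℝ)^n * K / δ ≤ C := by
    intro C hC
    have hA1 : Paper.MemA1 ω C := by
      have h2 := hC.2
      rw [Paper.MemAp, if_pos rfl] at h2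
      exact h2
    have hQcube : Paper.IsCube (cube (WithLp.toLp 2 (fun _ => -1) : EuclideanSpace ℝ (Fin n)) 2) :=
      ⟨(WithLp.toLp 2 (fun _ => -1) : EuclideanSpace ℝ (Fin n)), 2, by norm_num, rfl⟩
    have h3 := hA1 _ hQcube
    have h4 := a1_lowerbound hn hδ0 hδn hC.1 h3
    rw [hK, hvolB]
    exact h4
  -- locally integrable
  have hloc : LocallyIntegrable ω volume := by
    intro x
    refine ⟨Metric.ball x 1, Metric.ball_mem_nhds x one_pos,
      (intOn_ball hn hδ0 (R := ‖x‖ + 1) (by positivity)).mono_set ?_⟩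
    intro y hy
    rw [Metric.mem_ball, dist_eq_norm] at hy
    rw [mem_ball_zero_iff]
    calc ‖y‖ = ‖y - x + x‖ := by congr 1; abel
      _ ≤ ‖y - x‖ + ‖x‖ := norm_add_le _ _
      _ < ‖x‖ + 1 := by linarith
  refine ⟨⟨fun x => Real.rpow_nonneg (norm_nonneg _) _, hloc, ⟨c₂ / δ, hmemAp⟩⟩, ?_, ?_, ?_, ?_⟩
  · -- lower bound for A1const
    have h5 : c₁ * δ⁻¹ ≤ sInf {C : ℝ | 0 ≤ C ∧ Paper.MemAp 1 ω C} := by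
      refine le_csInf ⟨c₂ / δ, hmem⟩ (fun C hC => ?_)
      calc c₁ * δ⁻¹ = (3/8 : ℝ)^n * K / δ := by rw [hc₁]; ring
        _ ≤ C := hlb C hC
    exact h5
  · -- upper bound for A1const
    have h5 : sInf {C : ℝ | 0 ≤ C ∧ Paper.MemAp 1 ω C} ≤ c₂ / δ := csInf_le hbdd hmem
    rw [div_eq_mul_inv] at h5
    exact h5
  · -- lower bound for ω(B)
    rw [integral_ball hn hδ0 one_pos, Real.one_rpow]
    calc c₁ * δ⁻¹ ≤ K * δ⁻¹ := mul_le_mul_of_nonneg_right hc₁K (by positivity)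
      _ = (n : ℝ) * volB * (1 / δ) := by rw [hK]; ring
  · -- upper bound for ω(B)
    rw [integral_ball hn hδ0 one_pos, Real.one_rpow]
    calc (n : ℝ) * volB * (1 / δ) = K * δ⁻¹ := by rw [hK]; ring
      _ ≤ c₂ * δ⁻¹ := mul_le_mul_of_nonneg_right hKc₂ (by positivity)


end
end

section
/- Let $\omega$ be a nonnegative locally integrable function on $\mathbb{R}$ and $p\in(1,\infty)$. Suppose there exist $s\in(0,1)$, $q\in[1,\infty)$, and $C>0$ such that for every $r>0$ and every $f\in\dot{W}^{1,p}_\omega(\mathbb{R})$, $\left(\int_{\mathbb{R}}\left(\int_{|h|<r}\frac{|f(x+h)-f(x)|^q}{|h|^{1+sq}}\,dh\right)^{p/q}\omega(x)\,dx\right)^{1/p}\le C\,r^{1-s}\,\|f'\|_{L^p_\omega(\mathbb{R})}$. Then $\omega\in A_p$. -/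
open MeasureTheory Real Set
open scoped Classical ENNReal

noncomputable section

open Paper

/-- The one-dimensional `A_p` condition (over bounded open intervals) with constant `C`. -/
def MemApR (p : ℝ) (ω : ℝ → ℝ) (C : ℝ) : Prop :=
  ∀ a b : ℝ, a < b →
    IntegrableOn (fun x => ω x ^ (-1 / (p - 1))) (Set.Ioo a b) volume ∧
    (⨍ x in Set.Ioo a b, ω x) * (⨍ x in Set.Ioo a b, ω x ^ (-1 / (p - 1))) ^ (p - 1) ≤ C

namespace S19

variable {ω : ℝ → ℝ} {p ε a b : ℝ}

def sg (ω : ℝ → ℝ) (p ε : ℝ) (x : ℝ) : ℝ := (ω x + ε) ^ (-1/(p-1))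

lemma sg_nonneg (hε : 0 ≤ ε) (h0 : ∀ x, 0 ≤ ω x) (x : ℝ) : 0 ≤ sg ω p ε x :=
  Real.rpow_nonneg (by have := h0 x; linarith) _

lemma sg_le (hp : 1 < p) (hε : 0 < ε) {x : ℝ} (h0 : 0 ≤ ω x) :
    sg ω p ε x ≤ ε ^ (-1/(p-1)) :=
  Real.rpow_le_rpow_of_nonpos hε (by linarith)
    (by rw [neg_div]; exact neg_nonpos.2 (div_nonneg zero_le_one (by linarith)))

lemma sg_meas (hω : AEStronglyMeasurable ω volume) :
    AEStronglyMeasurable (sg ω p ε) volume := by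
  have : AEMeasurable (fun x => ω x + ε) volume := hω.aemeasurable.add aemeasurable_const
  exact (this.pow_const _).aestronglyMeasurable

def gg (ω : ℝ → ℝ) (p ε a b : ℝ) : ℝ → ℝ := (Set.Ioo a b).indicator (sg ω p ε)

lemma gg_nonneg (hε : 0 ≤ ε) (h0 : ∀ x, 0 ≤ ω x) (x : ℝ) : 0 ≤ gg ω p ε a b x :=
  Set.indicator_nonneg (fun y _ => sg_nonneg hε h0 y) x

lemma gg_le (hp : 1 < p) (hε : 0 < ε) (h0 : ∀ x, 0 ≤ ω x) (x : ℝ) :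
    gg ω p ε a b x ≤ ε ^ (-1/(p-1)) := by
  classical
  unfold gg Set.indicator
  split
  · exact sg_le hp hε (h0 x)
  · positivity

lemma gg_meas (hω : AEStronglyMeasurable ω volume) :
    AEStronglyMeasurable (gg ω p ε a b) volume :=
  (sg_meas hω).indicator measurableSet_Ioo

lemma gg_int (hp : 1 < p) (hε : 0 < ε) (h0 : ∀ x, 0 ≤ ω x)
    (hω : AEStronglyMeasurable ω volume) : Integrable (gg ω p ε a b) volume := by
  rw [gg, integrable_indicator_iff measurableSet_Ioo]
  exact Measure.integrableOn_of_bounded (by simp) (sg_meas hω)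
    (Filter.Eventually.of_forall fun x =>
      by rw [Real.norm_eq_abs, abs_of_nonneg (sg_nonneg hε.le h0 x)]; exact sg_le hp hε (h0 x))

def ff (ω : ℝ → ℝ) (p ε a b : ℝ) (x : ℝ) : ℝ := ∫ t in Set.Iic x, gg ω p ε a b t

lemma ff_sub (hp : 1 < p) (hε : 0 < ε) (h0 : ∀ x, 0 ≤ ω x)
    (hω : AEStronglyMeasurable ω volume) {x y : ℝ} (hxy : x ≤ y) :
    ff ω p ε a b y - ff ω p ε a b x = ∫ t in Set.Ioc x y, gg ω p ε a b t := by
  have hint := gg_int (a := a) (b := b) hp hε h0 hω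
  have : ff ω p ε a b y = ff ω p ε a b x + ∫ t in Set.Ioc x y, gg ω p ε a b t := by
    rw [ff, ← Set.Iic_union_Ioc_eq_Iic hxy,
      setIntegral_union (Set.Iic_disjoint_Ioc le_rfl) measurableSet_Ioc
        hint.integrableOn hint.integrableOn]
    rfl
  linarith

lemma ff_mono (hp : 1 < p) (hε : 0 < ε) (h0 : ∀ x, 0 ≤ ω x)
    (hω : AEStronglyMeasurable ω volume) : Monotone (ff ω p ε a b) := by
  intro x y hxy
  have h := ff_sub (a := a) (b := b) hp hε h0 hω hxy
  have : 0 ≤ ∫ t in Set.Ioc x y, gg ω p ε a b t :=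
    setIntegral_nonneg measurableSet_Ioc fun t _ => gg_nonneg hε.le h0 t
  linarith

lemma ff_lip (hp : 1 < p) (hε : 0 < ε) (h0 : ∀ x, 0 ≤ ω x)
    (hω : AEStronglyMeasurable ω volume) {x y : ℝ} (hxy : x ≤ y) :
    ff ω p ε a b y - ff ω p ε a b x ≤ ε ^ (-1/(p-1)) * (y - x) := by
  rw [ff_sub hp hε h0 hω hxy]
  calc ∫ t in Set.Ioc x y, gg ω p ε a b t
      ≤ ∫ _ in Set.Ioc x y, ε ^ (-1/(p-1)) :=
        setIntegral_mono_on (gg_int hp hε h0 hω).integrableOn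
          (integrableOn_const measure_Ioc_lt_top.ne) measurableSet_Ioc
          fun t _ => gg_le hp hε h0 t
    _ = ε ^ (-1/(p-1)) * (y - x) := by
        rw [setIntegral_const, measureReal_def, Real.volume_Ioc, smul_eq_mul,
          ENNReal.toReal_ofReal (by linarith), mul_comm]

lemma ff_eq (x : ℝ) : ff ω p ε a b x = ∫ t in Set.Iic x ∩ Set.Ioo a b, sg ω p ε t := by
  rw [ff, gg, setIntegral_indicator measurableSet_Ioo]

lemma ff_zero (hxa : x ≤ a) : ff ω p ε a b x = 0 := by
  rw [ff_eq]
  have : Set.Iic x ∩ Set.Ioo a b = ∅ := by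
    ext t; simp only [Set.mem_inter_iff, Set.mem_Iic, Set.mem_Ioo, Set.mem_empty_iff_false,
      iff_false, not_and, and_imp]
    intro h1 h2; linarith
  rw [this]; simp

lemma ff_top (hbx : b ≤ x) : ff ω p ε a b x = ∫ t in Set.Ioo a b, sg ω p ε t := by
  rw [ff_eq]
  have : Set.Iic x ∩ Set.Ioo a b = Set.Ioo a b := by
    apply Set.inter_eq_self_of_subset_right
    intro t ht
    exact Set.mem_Iic.2 (le_trans ht.2.le hbx)
  rw [this]

lemma ff_nonneg (hε : 0 ≤ ε) (h0 : ∀ x, 0 ≤ ω x) (x : ℝ) : 0 ≤ ff ω p ε a b x := by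
  rw [ff_eq]
  exact setIntegral_nonneg (measurableSet_Iic.inter measurableSet_Ioo)
    fun t _ => sg_nonneg hε h0 t

lemma ff_le_S (hp : 1 < p) (hε : 0 < ε) (h0 : ∀ x, 0 ≤ ω x)
    (hω : AEStronglyMeasurable ω volume) (x : ℝ) :
    ff ω p ε a b x ≤ ∫ t in Set.Ioo a b, sg ω p ε t := by
  rcases le_total x b with h | h
  · rw [← ff_top (le_refl b)]
    exact ff_mono hp hε h0 hω h
  · rw [ff_top h]

lemma ff_locint (hp : 1 < p) (hε : 0 < ε) (h0 : ∀ x, 0 ≤ ω x)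
    (hω : AEStronglyMeasurable ω volume) :
    LocallyIntegrable (ff ω p ε a b) volume :=
  (ff_mono hp hε h0 hω).locallyIntegrable

lemma ff_weak (hp : 1 < p) (hε : 0 < ε) (h0 : ∀ x, 0 ≤ ω x)
    (hω : AEStronglyMeasurable ω volume) (φ : ℝ → ℝ)
    (hφ : ContDiff ℝ (⊤ : ℕ∞) φ) (hsupp : HasCompactSupport φ) :
    ∫ x, ff ω p ε a b x * deriv φ x = -∫ x, gg ω p ε a b x * φ x := by
  have hφ1 : ContDiff ℝ 1 φ := hφ.of_le (by exact_mod_cast le_top)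
  have hdφcont : Continuous (deriv φ) := hφ.continuous_deriv (by exact_mod_cast le_top)
  have hdφint : Integrable (deriv φ) volume :=
    hdφcont.integrable_of_hasCompactSupport hsupp.deriv
  have hgint := gg_int (a := a) (b := b) hp hε h0 hω
  set g := gg ω p ε a b with hg
  set Φ : ℝ × ℝ → ℝ :=
    {z : ℝ × ℝ | z.1 ≤ z.2}.indicator (fun z => g z.1 * deriv φ z.2) with hΦ
  have hΦint : Integrable Φ (volume.prod volume) :=
    (hgint.mul_prod hdφint).indicator (measurableSet_le measurable_fst measurable_snd)
  have key1 : ∀ x, ff ω p ε a b x * deriv φ x = ∫ t, Φ (t, x) := by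
    intro x
    have e1 : ∀ t, Φ (t, x) = (Set.Iic x).indicator (fun t => g t * deriv φ x) t := by
      intro t
      simp only [hΦ, Set.indicator_apply, Set.mem_setOf_eq, Set.mem_Iic]
    rw [integral_congr_ae (Filter.Eventually.of_forall e1),
      integral_indicator measurableSet_Iic, integral_mul_const, ff]
  have key2 : ∀ t, (∫ x, Φ (t, x)) = -(g t * φ t) := by
    intro t
    have e2 : ∀ x, Φ (t, x) = (Set.Ici t).indicator (fun x => g t * deriv φ x) x := by
      intro x
      simp only [hΦ, Set.indicator_apply, Set.mem_setOf_eq, Set.mem_Ici]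
    rw [integral_congr_ae (Filter.Eventually.of_forall e2),
      integral_indicator measurableSet_Ici, integral_const_mul,
      integral_Ici_eq_integral_Ioi, hsupp.integral_Ioi_deriv_eq hφ1 t, mul_neg]
  calc ∫ x, ff ω p ε a b x * deriv φ x = ∫ x, ∫ t, Φ (t, x) := by
        exact integral_congr_ae (Filter.Eventually.of_forall key1)
    _ = ∫ t, ∫ x, Φ (t, x) := (integral_integral_swap (f := fun t x => Φ (t, x)) hΦint).symm
    _ = ∫ t, -(g t * φ t) := integral_congr_ae (Filter.Eventually.of_forall key2)
    _ = -∫ t, g t * φ t := integral_neg _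

lemma psi_int {r e : ℝ} (hr : 0 < r) (he : -1 < e) :
    IntegrableOn (fun h : ℝ => |h| ^ e) (Set.Ioo (-r) r) volume := by
  have h1 : IntegrableOn (fun h : ℝ => |h| ^ e) (Set.Ioo 0 r) volume := by
    have h0 : IntegrableOn (fun h : ℝ => h ^ e) (Set.Ioo 0 r) volume := by
      have := intervalIntegral.intervalIntegrable_rpow' (a := 0) (b := r) he
      rw [intervalIntegrable_iff_integrableOn_Ioc_of_le hr.le] at this
      exact this.mono_set Set.Ioo_subset_Ioc_self
    apply h0.congr_fun (fun h hh => by rw [abs_of_pos hh.1]) measurableSet_Ioo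
  have hz : IntegrableOn (fun h : ℝ => |h| ^ e) {(0 : ℝ)} volume := by
    unfold IntegrableOn
    rw [Measure.restrict_eq_zero.2 (measure_singleton 0)]
    exact integrable_zero_measure
  have h2 : IntegrableOn (fun h : ℝ => |h| ^ e) (Set.Ioo (-r) 0) volume := by
    have h1' : Integrable ((Set.Ioo (0:ℝ) r).indicator fun h : ℝ => |h| ^ e) volume :=
      (integrable_indicator_iff measurableSet_Ioo).2 h1
    have h1n := h1'.comp_neg
    have heq : (fun h : ℝ => (Set.Ioo (0:ℝ) r).indicator (fun h : ℝ => |h| ^ e) (-h)) =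
        (Set.Ioo (-r) (0:ℝ)).indicator fun h : ℝ => |h| ^ e := by
      funext h
      by_cases hh : h ∈ Set.Ioo (-r) (0:ℝ)
      · rw [Set.indicator_of_mem hh]
        have : -h ∈ Set.Ioo (0:ℝ) r := ⟨by linarith [hh.2], by linarith [hh.1]⟩
        rw [Set.indicator_of_mem this, abs_neg]
      · rw [Set.indicator_of_notMem hh, Set.indicator_of_notMem]
        intro hcon
        exact hh ⟨by linarith [hcon.2], by linarith [hcon.1]⟩
    rw [heq] at h1n
    exact (integrable_indicator_iff measurableSet_Ioo).1 h1n
  have : Set.Ioo (-r) r ⊆ Set.Ioo (-r) 0 ∪ ({(0:ℝ)} ∪ Set.Ioo 0 r) := by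
    intro h hh
    rcases lt_trichotomy h 0 with h' | h' | h'
    · exact Or.inl ⟨hh.1, h'⟩
    · exact Or.inr (Or.inl (by simp [h']))
    · exact Or.inr (Or.inr ⟨h', hh.2⟩)
  exact (h2.union (hz.union h1)).mono_set this

lemma ff_absdiff_le (hp : 1 < p) (hε : 0 < ε) (h0 : ∀ x, 0 ≤ ω x)
    (hω : AEStronglyMeasurable ω volume) (x h : ℝ) :
    |ff ω p ε a b (x + h) - ff ω p ε a b x| ≤ ε ^ (-1/(p-1)) * |h| := by
  rcases le_total 0 h with hh | hh
  · have hxy : x ≤ x + h := by linarith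
    have hm : ff ω p ε a b x ≤ ff ω p ε a b (x + h) := ff_mono hp hε h0 hω hxy
    have hl := ff_lip (a := a) (b := b) hp hε h0 hω hxy
    rw [abs_of_nonneg (by linarith), abs_of_nonneg hh]
    calc ff ω p ε a b (x + h) - ff ω p ε a b x ≤ ε ^ (-1/(p-1)) * (x + h - x) := hl
      _ = ε ^ (-1/(p-1)) * h := by ring
  · have hxy : x + h ≤ x := by linarith
    have hm : ff ω p ε a b (x + h) ≤ ff ω p ε a b x := ff_mono hp hε h0 hω hxy
    have hl := ff_lip (a := a) (b := b) hp hε h0 hω hxy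
    rw [abs_of_nonpos (by linarith), abs_of_nonpos hh]
    calc -(ff ω p ε a b (x + h) - ff ω p ε a b x)
        = ff ω p ε a b x - ff ω p ε a b (x + h) := by ring
      _ ≤ ε ^ (-1/(p-1)) * (x - (x + h)) := hl
      _ = ε ^ (-1/(p-1)) * -h := by ring

lemma integrand_meas (hp : 1 < p) (hε : 0 < ε) (h0 : ∀ x, 0 ≤ ω x)
    (hω : AEStronglyMeasurable ω volume) (s q : ℝ) :
    Measurable (fun z : ℝ × ℝ =>
      |ff ω p ε a b (z.1 + z.2) - ff ω p ε a b z.1| ^ q / |z.2| ^ (1 + s * q)) := by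
  have hffm : Measurable (ff ω p ε a b) := (ff_mono hp hε h0 hω).measurable
  exact (((hffm.comp (measurable_fst.add measurable_snd)).sub
    (hffm.comp measurable_fst)).abs.pow_const q).div ((measurable_snd.abs).pow_const _)

lemma integrand_nonneg (s q x h : ℝ) :
    0 ≤ |ff ω p ε a b (x + h) - ff ω p ε a b x| ^ q / |h| ^ (1 + s * q) :=
  div_nonneg (Real.rpow_nonneg (abs_nonneg _) _) (Real.rpow_nonneg (abs_nonneg _) _)

lemma integrand_le (hp : 1 < p) (hε : 0 < ε) (h0 : ∀ x, 0 ≤ ω x)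
    (hω : AEStronglyMeasurable ω volume) {s q : ℝ} (hs : 0 < s) (hq : 1 ≤ q) (x h : ℝ) :
    |ff ω p ε a b (x + h) - ff ω p ε a b x| ^ q / |h| ^ (1 + s * q) ≤
      (ε ^ (-1/(p-1))) ^ q * |h| ^ (q - 1 - s * q) := by
  set M := ε ^ (-1/(p-1)) with hM
  have hM0 : 0 ≤ M := Real.rpow_nonneg hε.le _
  by_cases hh : h = 0
  · subst hh
    rw [abs_zero, Real.zero_rpow (by nlinarith : 1 + s * q ≠ 0), div_zero]
    positivity
  · have habs : 0 < |h| := abs_pos.2 hh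
    calc |ff ω p ε a b (x + h) - ff ω p ε a b x| ^ q / |h| ^ (1 + s * q)
        ≤ (M * |h|) ^ q / |h| ^ (1 + s * q) := by
          apply div_le_div_of_nonneg_right
          · exact Real.rpow_le_rpow (abs_nonneg _) (ff_absdiff_le hp hε h0 hω x h)
              (by linarith)
          · exact (Real.rpow_pos_of_pos habs _).le
      _ = M ^ q * (|h| ^ q / |h| ^ (1 + s * q)) := by
          rw [Real.mul_rpow hM0 (abs_nonneg _), mul_div_assoc]
      _ = M ^ q * |h| ^ (q - 1 - s * q) := by
          rw [← Real.rpow_sub habs]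
          ring_nf

lemma inner_int (hp : 1 < p) (hε : 0 < ε) (h0 : ∀ x, 0 ≤ ω x)
    (hω : AEStronglyMeasurable ω volume) {s q : ℝ} (hs : 0 < s) (hs1 : s < 1) (hq : 1 ≤ q)
    {r : ℝ} (hr : 0 < r) (x : ℝ) :
    IntegrableOn (fun h => |ff ω p ε a b (x + h) - ff ω p ε a b x| ^ q / |h| ^ (1 + s * q))
      (Set.Ioo (-r) r) volume := by
  have he : (-1:ℝ) < q - 1 - s * q := by nlinarith
  have hdom := (psi_int (e := q - 1 - s * q) hr he).const_mul ((ε ^ (-1/(p-1))) ^ q)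
  apply Integrable.mono' hdom
  · exact ((integrand_meas hp hε h0 hω s q).comp
      (measurable_const.prodMk measurable_id)).aestronglyMeasurable
  · exact Filter.Eventually.of_forall fun h => by
      rw [Real.norm_eq_abs, abs_of_nonneg (integrand_nonneg s q x h)]
      exact integrand_le hp hε h0 hω hs hq x h

lemma inner_nonneg (s q r x : ℝ) :
    0 ≤ ∫ h in Set.Ioo (-r) r, |ff ω p ε a b (x + h) - ff ω p ε a b x| ^ q / |h| ^ (1 + s * q) :=
  setIntegral_nonneg measurableSet_Ioo fun h _ => integrand_nonneg s q x h

lemma inner_le_K (hp : 1 < p) (hε : 0 < ε) (h0 : ∀ x, 0 ≤ ω x)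
    (hω : AEStronglyMeasurable ω volume) {s q : ℝ} (hs : 0 < s) (hs1 : s < 1) (hq : 1 ≤ q)
    {r : ℝ} (hr : 0 < r) (x : ℝ) :
    (∫ h in Set.Ioo (-r) r, |ff ω p ε a b (x + h) - ff ω p ε a b x| ^ q / |h| ^ (1 + s * q)) ≤
      (ε ^ (-1/(p-1))) ^ q * ∫ h in Set.Ioo (-r) r, |h| ^ (q - 1 - s * q) := by
  have he : (-1:ℝ) < q - 1 - s * q := by nlinarith
  rw [← MeasureTheory.integral_const_mul]
  exact setIntegral_mono_on (inner_int hp hε h0 hω hs hs1 hq hr x)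
    ((psi_int hr he).const_mul _) measurableSet_Ioo fun h _ => integrand_le hp hε h0 hω hs hq x h

lemma inner_lower (hp : 1 < p) (hε : 0 < ε) (h0 : ∀ x, 0 ≤ ω x)
    (hω : AEStronglyMeasurable ω volume) (hab : a < b) {s q : ℝ} (hs : 0 < s) (hs1 : s < 1)
    (hq : 1 ≤ q) {x : ℝ} (hx : x ∈ Set.Ioo a b) :
    ((∫ t in Set.Ioo a b, sg ω p ε t) / 2) ^ q / (2*(b-a)) ^ (1 + s * q) * (b-a) ≤
      ∫ h in Set.Ioo (-(2*(b-a))) (2*(b-a)),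
        |ff ω p ε a b (x + h) - ff ω p ε a b x| ^ q / |h| ^ (1 + s * q) := by
  obtain ⟨hxa, hxb⟩ := hx
  have hL : 0 < b - a := by linarith
  have hr : 0 < 2*(b-a) := by linarith
  have hS0 : 0 ≤ ∫ t in Set.Ioo a b, sg ω p ε t :=
    setIntegral_nonneg measurableSet_Ioo fun t _ => sg_nonneg hε.le h0 t
  have hu0 : 0 ≤ ff ω p ε a b x := ff_nonneg hε.le h0 x
  have huS : ff ω p ε a b x ≤ ∫ t in Set.Ioo a b, sg ω p ε t := ff_le_S hp hε h0 hω x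
  set S := ∫ t in Set.Ioo a b, sg ω p ε t with hSdef
  set u := ff ω p ε a b x with hudef
  have hint := inner_int (a := a) (b := b) hp hε h0 hω hs hs1 hq hr x
  set c0 := (S / 2) ^ q / (2*(b-a)) ^ (1 + s * q) with hc0
  have hc00 : 0 ≤ c0 := div_nonneg (Real.rpow_nonneg (by linarith) _) (Real.rpow_nonneg hr.le _)
  have hsq : (0:ℝ) ≤ 1 + s * q := by nlinarith
  have main : ∀ J : Set ℝ, J ⊆ Set.Ioo (-(2*(b-a))) (2*(b-a)) → MeasurableSet J →
      (volume J).toReal = b - a →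
      (∀ h ∈ J, c0 ≤ |ff ω p ε a b (x + h) - ff ω p ε a b x| ^ q / |h| ^ (1 + s * q)) →
      c0 * (b-a) ≤ ∫ h in Set.Ioo (-(2*(b-a))) (2*(b-a)),
        |ff ω p ε a b (x + h) - ff ω p ε a b x| ^ q / |h| ^ (1 + s * q) := by
    intro J hJsub hJm hJvol hJlow
    have hJfin : volume J ≠ ⊤ :=
      ne_top_of_le_ne_top (by simp) (measure_mono hJsub)
    calc c0 * (b-a) = (volume J).toReal • c0 := by rw [hJvol, smul_eq_mul, mul_comm]
      _ = ∫ _ in J, c0 := (setIntegral_const c0).symm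
      _ ≤ ∫ h in J, |ff ω p ε a b (x + h) - ff ω p ε a b x| ^ q / |h| ^ (1 + s * q) :=
          setIntegral_mono_on (integrableOn_const hJfin)
            (hint.mono_set hJsub) hJm hJlow
      _ ≤ _ := setIntegral_mono_set hint
            (Filter.Eventually.of_forall fun h => integrand_nonneg s q x h)
            (HasSubset.Subset.eventuallyLE hJsub)
  have habs_bound : ∀ h : ℝ, 0 < |h| → |h| ≤ 2*(b-a) → ∀ v : ℝ, S/2 ≤ v → v ≤ S →
      c0 ≤ v ^ q / |h| ^ (1 + s * q) := by
    intro h hh1 hh2 v hv1 hv2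
    apply div_le_div₀ (Real.rpow_nonneg (by linarith) _)
      (Real.rpow_le_rpow (by linarith) hv1 (by linarith))
      (Real.rpow_pos_of_pos hh1 _)
      (Real.rpow_le_rpow (abs_nonneg _) hh2 hsq)
  rcases le_total (S/2) (S - u) with hcase | hcase
  · apply main (Set.Ioo (b-a) (2*(b-a))) (Set.Ioo_subset_Ioo (by linarith) le_rfl)
      measurableSet_Ioo
      (by rw [Real.volume_Ioo, ENNReal.toReal_ofReal (by linarith)]; ring)
    intro h hh
    have hxh : b ≤ x + h := by linarith [hh.1]
    rw [← hudef, ff_top hxh, ← hSdef,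
      abs_of_nonneg (by linarith : (0:ℝ) ≤ S - u)]
    exact habs_bound h (abs_pos.2 (by nlinarith [hh.1]))
      (by rw [abs_of_pos (by linarith [hh.1] : (0:ℝ) < h)]; exact hh.2.le)
      (S - u) hcase (by linarith)
  · apply main (Set.Ioo (-(2*(b-a))) (-(b-a)))
      (Set.Ioo_subset_Ioo le_rfl (by linarith)) measurableSet_Ioo
      (by rw [Real.volume_Ioo, ENNReal.toReal_ofReal (by linarith)]; ring)
    intro h hh
    have hxh : x + h ≤ a := by linarith [hh.2]
    rw [← hudef, ff_zero hxh, abs_of_nonpos (by linarith : 0 - u ≤ 0)]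
    have : -(0 - u) = u := by ring
    rw [this]
    exact habs_bound h (abs_pos.2 (by nlinarith [hh.2]))
      (by rw [abs_of_neg (by linarith [hh.2] : h < 0)]; linarith [hh.1])
      u (by linarith) huS

lemma inner_zero (hp : 1 < p) {s q : ℝ} (hq : 1 ≤ q) {r : ℝ} (hr : 0 < r) {x : ℝ}
    (hx : x ∉ Set.Icc (a - r) (b + r)) :
    (∫ h in Set.Ioo (-r) r, |ff ω p ε a b (x + h) - ff ω p ε a b x| ^ q / |h| ^ (1 + s * q))
      = 0 := by
  apply setIntegral_eq_zero_of_forall_eq_zero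
  intro h hh
  rw [Set.mem_Icc, not_and_or] at hx
  have heq : ff ω p ε a b (x + h) = ff ω p ε a b x := by
    rcases hx with hx | hx
    · push_neg at hx
      rw [ff_zero (by linarith [hh.2] : x + h ≤ a), ff_zero (by linarith [hh.2] : x ≤ a)]
    · push_neg at hx
      rw [ff_top (by linarith [hh.1] : b ≤ x + h), ff_top (by linarith [hh.1] : b ≤ x)]
  rw [heq, sub_self, abs_zero, Real.zero_rpow (by linarith : q ≠ 0), zero_div]

lemma F_int (hp : 1 < p) (hε : 0 < ε) (h0 : ∀ x, 0 ≤ ω x)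
    (hloc : LocallyIntegrable ω volume) {s q : ℝ} (hs : 0 < s) (hs1 : s < 1) (hq : 1 ≤ q)
    {r : ℝ} (hr : 0 < r) :
    Integrable (fun x => (∫ h in Set.Ioo (-r) r,
      |ff ω p ε a b (x + h) - ff ω p ε a b x| ^ q / |h| ^ (1 + s * q)) ^ (p/q) * ω x)
      volume := by
  have hω : AEStronglyMeasurable ω volume := hloc.aestronglyMeasurable
  have hpq0 : 0 < p / q := div_pos (by linarith) (by linarith)
  set K := (ε ^ (-1/(p-1))) ^ q * ∫ h in Set.Ioo (-r) r, |h| ^ (q - 1 - s * q) with hK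
  have hK0 : 0 ≤ K := mul_nonneg (Real.rpow_nonneg (Real.rpow_nonneg hε.le _) _)
    (setIntegral_nonneg measurableSet_Ioo fun h _ => Real.rpow_nonneg (abs_nonneg _) _)
  have hm : AEStronglyMeasurable (fun x => (∫ h in Set.Ioo (-r) r,
      |ff ω p ε a b (x + h) - ff ω p ε a b x| ^ q / |h| ^ (1 + s * q)) ^ (p/q) * ω x) volume := by
    have h1 : StronglyMeasurable (fun x => ∫ h in Set.Ioo (-r) r,
        |ff ω p ε a b (x + h) - ff ω p ε a b x| ^ q / |h| ^ (1 + s * q)) :=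
      (integrand_meas hp hε h0 hω s q).stronglyMeasurable.integral_prod_right'
    exact ((h1.measurable.pow_const (p/q)).aemeasurable.mul hω.aemeasurable).aestronglyMeasurable
  have hGd : Integrable ((Set.Icc (a - r) (b + r)).indicator fun x => K ^ (p/q) * ω x) volume :=
    (integrable_indicator_iff measurableSet_Icc).2
      ((hloc.integrableOn_isCompact isCompact_Icc).const_mul _)
  apply Integrable.mono' hGd hm
  refine Filter.Eventually.of_forall fun x => ?_
  rw [Real.norm_eq_abs, abs_of_nonneg (mul_nonneg
    (Real.rpow_nonneg (inner_nonneg s q r x) _) (h0 x))]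
  by_cases hx : x ∈ Set.Icc (a - r) (b + r)
  · rw [Set.indicator_of_mem hx]
    exact mul_le_mul_of_nonneg_right
      (Real.rpow_le_rpow (inner_nonneg s q r x) (inner_le_K hp hε h0 hω hs hs1 hq hr x) hpq0.le)
      (h0 x)
  · rw [Set.indicator_of_notMem hx, inner_zero hp hq hr hx,
      Real.zero_rpow (ne_of_gt hpq0), zero_mul]

lemma pow_weight_le (hp : 1 < p) (hε : 0 < ε) (h0 : ∀ x, 0 ≤ ω x) (x : ℝ) :
    |gg ω p ε a b x| ^ p * ω x ≤ gg ω p ε a b x := by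
  by_cases hx : x ∈ Set.Ioo a b
  · rw [gg, Set.indicator_of_mem hx, abs_of_nonneg (sg_nonneg hε.le h0 x)]
    have h1 : 0 < ω x + ε := by linarith [h0 x]
    unfold sg
    have e1 : ((ω x + ε) ^ (-1/(p-1))) ^ p = (ω x + ε) ^ ((-1/(p-1)) * p) :=
      (Real.rpow_mul h1.le _ _).symm
    have e2 : (-1/(p-1)) * p = (-1/(p-1)) + (-1) := by
      have : p - 1 ≠ 0 := by linarith
      field_simp
      ring
    rw [e1, e2, Real.rpow_add h1, Real.rpow_neg_one, mul_assoc]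
    have h2 : (ω x + ε)⁻¹ * ω x ≤ 1 := by
      rw [← div_eq_inv_mul]
      exact div_le_one_of_le₀ (by linarith) h1.le
    calc (ω x + ε) ^ (-1/(p-1)) * ((ω x + ε)⁻¹ * ω x)
        ≤ (ω x + ε) ^ (-1/(p-1)) * 1 :=
          mul_le_mul_of_nonneg_left h2 (Real.rpow_nonneg h1.le _)
      _ = (ω x + ε) ^ (-1/(p-1)) := mul_one _
  · rw [gg, Set.indicator_of_notMem hx]
    rw [abs_zero, Real.zero_rpow (by linarith : p ≠ 0), zero_mul]

lemma log_eq_imp_eq {x y : ℝ} (hx : 0 < x) (hy : 0 < y) (h : Real.log x = Real.log y) :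
    x = y := by rw [← Real.exp_log hx, ← Real.exp_log hy, h]

lemma alg {p q s S L A Cc : ℝ} (hp : 1 < p) (hq : 1 ≤ q) (hs : 0 < s) (hs1 : s < 1)
    (hS : 0 < S) (hL : 0 < L) (hA : 0 ≤ A) (hCc : 0 < Cc)
    (hmain : ((S/2)^q / (2*L)^(1+s*q) * L)^(p/q) * A ≤ (Cc * (2*L)^(1-s))^p * S) :
    S^(p-1) * A ≤ (8*Cc*L)^p := by
  have hq0 : 0 < q := lt_of_lt_of_le one_pos hq
  have hp0 : 0 < p := by linarith
  rcases eq_or_lt_of_le hA with hA0 | hA0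
  · rw [← hA0, mul_zero]; positivity
  have hL2 : (0:ℝ) < 2*L := by linarith
  have hlog := Real.log_le_log (by positivity) hmain
  rw [show (8:ℝ)*Cc*L = 2^(3:ℝ)*Cc*L by norm_num [Real.rpow_natCast 2 3]]
  apply (Real.log_le_log_iff (by positivity) (by positivity)).1
  simp (disch := positivity) only [Real.log_mul, Real.log_div, Real.log_rpow] at hlog ⊢
  have hpq : p/q * q = p := by field_simp
  have hl2 : 0 ≤ Real.log 2 := Real.log_nonneg one_le_two
  have htp : p/q ≤ p := by
    rw [div_le_iff₀ hq0]; nlinarith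
  have hqne : q ≠ 0 := ne_of_gt hq0
  have expand : p / q * (q * (Real.log S - Real.log 2)
        - (1 + s * q) * (Real.log 2 + Real.log L) + Real.log L) + Real.log A
      = p*Real.log S - p*Real.log 2 - (p/q)*Real.log 2 - s*p*Real.log 2
        - s*p*Real.log L + Real.log A := by
    field_simp
    ring
  rw [expand] at hlog
  nlinarith [mul_nonneg (sub_nonneg.2 htp) hl2]

lemma gpw_int (hp : 1 < p) (hε : 0 < ε) (h0 : ∀ x, 0 ≤ ω x)
    (hω : AEStronglyMeasurable ω volume) :
    Integrable (fun x => |gg ω p ε a b x| ^ p * ω x) volume := by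
  apply Integrable.mono' (gg_int hp hε h0 hω)
  · exact ((((measurable_abs.comp_aemeasurable
      (gg_meas (a := a) (b := b) hω).aemeasurable)).pow_const p).mul
      hω.aemeasurable).aestronglyMeasurable
  · exact Filter.Eventually.of_forall fun x => by
      rw [Real.norm_eq_abs, abs_of_nonneg (mul_nonneg (Real.rpow_nonneg (abs_nonneg _) _) (h0 x))]
      exact pow_weight_le hp hε h0 x

lemma gpw_le_S (hp : 1 < p) (hε : 0 < ε) (h0 : ∀ x, 0 ≤ ω x)
    (hω : AEStronglyMeasurable ω volume) :
    ∫ x, |gg ω p ε a b x| ^ p * ω x ≤ ∫ t in Set.Ioo a b, sg ω p ε t := by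
  calc ∫ x, |gg ω p ε a b x| ^ p * ω x ≤ ∫ x, gg ω p ε a b x :=
        integral_mono (gpw_int hp hε h0 hω) (gg_int hp hε h0 hω) (pow_weight_le hp hε h0)
    _ = ∫ t in Set.Ioo a b, sg ω p ε t := by
        rw [gg, integral_indicator measurableSet_Ioo]

lemma raise_to_p {X Y p : ℝ} (hp : 1 < p) (hX : 0 ≤ X) (hY : 0 ≤ Y)
    (h : X ^ (1/p) ≤ Y) : X ≤ Y ^ p := by
  have hp0 : (0:ℝ) < p := by linarith
  have := Real.rpow_le_rpow (Real.rpow_nonneg hX _) h hp0.le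
  rwa [← Real.rpow_mul hX, one_div_mul_cancel (ne_of_gt hp0), Real.rpow_one] at this

lemma key (hp : 1 < p) (hε : 0 < ε) (h0 : ∀ x, 0 ≤ ω x)
    (hloc : LocallyIntegrable ω volume) (hab : a < b) {s q C : ℝ}
    (hs : 0 < s) (hs1 : s < 1) (hq : 1 ≤ q) (hC : 0 < C)
    (hInst : (∫ x, (∫ h in Set.Ioo (-(2*(b-a))) (2*(b-a)),
        |ff ω p ε a b (x + h) - ff ω p ε a b x| ^ q / |h| ^ (1 + s * q)) ^ (p / q) * ω x)
          ^ (1 / p) ≤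
      C * (2*(b-a)) ^ (1 - s) * (∫ x, |gg ω p ε a b x| ^ p * ω x) ^ (1 / p)) :
    (∫ t in Set.Ioo a b, sg ω p ε t) ^ (p - 1) * (∫ x in Set.Ioo a b, ω x) ≤
      (8 * C * (b - a)) ^ p := by
  have hω : AEStronglyMeasurable ω volume := hloc.aestronglyMeasurable
  have hL : 0 < b - a := by linarith
  have hr : 0 < 2*(b-a) := by linarith
  have hS0 : 0 ≤ ∫ t in Set.Ioo a b, sg ω p ε t :=
    setIntegral_nonneg measurableSet_Ioo fun t _ => sg_nonneg hε.le h0 t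
  have hA0 : 0 ≤ ∫ x in Set.Ioo a b, ω x :=
    setIntegral_nonneg measurableSet_Ioo fun t _ => h0 t
  set S := ∫ t in Set.Ioo a b, sg ω p ε t with hSdef
  set A := ∫ x in Set.Ioo a b, ω x with hAdef
  rcases eq_or_lt_of_le hS0 with hS | hS
  · rw [← hS, Real.zero_rpow (by linarith : p - 1 ≠ 0), zero_mul]
    positivity
  · apply alg hp hq hs hs1 hS hL hA0 hC
    have hpq0 : 0 < p / q := div_pos (by linarith) (by linarith)
    set c1 := ((S/2) ^ q / (2*(b-a)) ^ (1 + s*q) * (b-a)) ^ (p/q) with hc1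
    have hbase0 : 0 ≤ (S/2) ^ q / (2*(b-a)) ^ (1 + s*q) * (b-a) := by positivity
    have hc10 : 0 ≤ c1 := Real.rpow_nonneg hbase0 _
    have hωI : IntegrableOn ω (Set.Ioo a b) volume :=
      (hloc.integrableOn_isCompact isCompact_Icc).mono_set Set.Ioo_subset_Icc_self
    have hFi := F_int (a := a) (b := b) hp hε h0 hloc hs hs1 hq hr
    have hFnn : ∀ x, 0 ≤ (∫ h in Set.Ioo (-(2*(b-a))) (2*(b-a)),
        |ff ω p ε a b (x + h) - ff ω p ε a b x| ^ q / |h| ^ (1 + s * q)) ^ (p/q) * ω x :=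
      fun x => mul_nonneg (Real.rpow_nonneg (inner_nonneg _ _ _ _) _) (h0 x)
    have step1 : c1 * A ≤ ∫ x, (∫ h in Set.Ioo (-(2*(b-a))) (2*(b-a)),
        |ff ω p ε a b (x + h) - ff ω p ε a b x| ^ q / |h| ^ (1 + s * q)) ^ (p/q) * ω x := by
      calc c1 * A = ∫ x in Set.Ioo a b, c1 * ω x := (MeasureTheory.integral_const_mul c1 ω).symm
        _ ≤ ∫ x in Set.Ioo a b, (∫ h in Set.Ioo (-(2*(b-a))) (2*(b-a)),
            |ff ω p ε a b (x + h) - ff ω p ε a b x| ^ q / |h| ^ (1 + s * q)) ^ (p/q) * ω x := by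
            apply setIntegral_mono_on (hωI.const_mul c1) hFi.integrableOn measurableSet_Ioo
            intro x hx
            exact mul_le_mul_of_nonneg_right
              (Real.rpow_le_rpow hbase0 (inner_lower hp hε h0 hω hab hs hs1 hq hx) hpq0.le)
              (h0 x)
        _ ≤ _ := setIntegral_le_integral hFi (Filter.Eventually.of_forall hFnn)
    have hgpw0 : 0 ≤ ∫ x, |gg ω p ε a b x| ^ p * ω x :=
      integral_nonneg fun x => mul_nonneg (Real.rpow_nonneg (abs_nonneg _) _) (h0 x)
    have step2 : (c1 * A) ^ (1/p) ≤ C * (2*(b-a)) ^ (1-s) * S ^ (1/p) := by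
      calc (c1 * A) ^ (1/p)
          ≤ (∫ x, (∫ h in Set.Ioo (-(2*(b-a))) (2*(b-a)),
            |ff ω p ε a b (x + h) - ff ω p ε a b x| ^ q / |h| ^ (1 + s * q)) ^ (p/q) * ω x)
              ^ (1/p) :=
            Real.rpow_le_rpow (mul_nonneg hc10 hA0) step1 (by positivity)
        _ ≤ C * (2*(b-a)) ^ (1-s) * (∫ x, |gg ω p ε a b x| ^ p * ω x) ^ (1/p) := hInst
        _ ≤ C * (2*(b-a)) ^ (1-s) * S ^ (1/p) := by
            apply mul_le_mul_of_nonneg_left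
              (Real.rpow_le_rpow hgpw0 (gpw_le_S hp hε h0 hω) (by positivity))
              (by positivity)
    have step3 : c1 * A ≤ (C * (2*(b-a)) ^ (1-s)) ^ p * S := by
      have h3 := raise_to_p hp (mul_nonneg hc10 hA0) (by positivity) step2
      rwa [Real.mul_rpow (by positivity) (Real.rpow_nonneg hS0 _),
        ← Real.rpow_mul hS0, one_div_mul_cancel (by linarith : p ≠ 0), Real.rpow_one] at h3
    exact step3
end S19


/-- Theorem 1.2, necessity, one-dimensional case: the localized Gagliardo seminorm
inequality characterizes `A_p` weights. -/
theorem statement19 (p : ℝ) (hp : 1 < p) (ω : ℝ → ℝ) (h0 : ∀ x, 0 ≤ ω x)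
    (hloc : LocallyIntegrable ω volume) (s q C : ℝ) (hs : s ∈ Set.Ioo (0 : ℝ) 1)
    (hq : 1 ≤ q) (hC : 0 < C)
    (H : ∀ r : ℝ, 0 < r → ∀ f g : ℝ → ℝ,
      LocallyIntegrable f volume → AEStronglyMeasurable g volume →
      Integrable (fun x => |g x| ^ p * ω x) →
      (∀ φ : ℝ → ℝ, ContDiff ℝ (⊤ : ℕ∞) φ → HasCompactSupport φ →
        ∫ x, f x * deriv φ x = -∫ x, g x * φ x) →
      (∫ x, (∫ h in Set.Ioo (-r) r,
          |f (x + h) - f x| ^ q / |h| ^ (1 + s * q)) ^ (p / q) * ω x) ^ (1 / p) ≤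
        C * r ^ (1 - s) * (∫ x, |g x| ^ p * ω x) ^ (1 / p)) :
    ∃ C' : ℝ, MemApR p ω C' := by
  obtain ⟨hs0, hs1⟩ := hs
  have hω : AEStronglyMeasurable ω volume := hloc.aestronglyMeasurable
  have hexp_ne : (-1 : ℝ) / (p - 1) ≠ 0 := by
    apply div_ne_zero (by norm_num) (by linarith)
  refine ⟨(8*C) ^ p, fun a b hab => ?_⟩
  have hL : 0 < b - a := by linarith
  have keyε : ∀ ε : ℝ, 0 < ε →
      (∫ t in Set.Ioo a b, S19.sg ω p ε t) ^ (p - 1) * (∫ x in Set.Ioo a b, ω x) ≤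
        (8 * C * (b - a)) ^ p := by
    intro ε hε
    apply S19.key hp hε h0 hloc hab hs0 hs1 hq hC
    have := H (2*(b-a)) (by linarith) (S19.ff ω p ε a b) (S19.gg ω p ε a b)
      (S19.ff_locint hp hε h0 hω) (S19.gg_meas hω) (S19.gpw_int hp hε h0 hω)
      (fun φ hφ hφs => S19.ff_weak hp hε h0 hω φ hφ hφs)
    simpa using this
  have hωI : IntegrableOn ω (Set.Ioo a b) volume :=
    (hloc.integrableOn_isCompact isCompact_Icc).mono_set Set.Ioo_subset_Icc_self
  have hA0 : 0 ≤ ∫ x in Set.Ioo a b, ω x :=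
    setIntegral_nonneg measurableSet_Ioo fun t _ => h0 t
  have hvol : (volume (Set.Ioo a b)).toReal = b - a := by
    rw [Real.volume_Ioo, ENNReal.toReal_ofReal hL.le]
  rcases eq_or_lt_of_le hA0 with hA | hA
  · -- degenerate case : ω = 0 a.e. on I
    have hae : ω =ᵐ[volume.restrict (Set.Ioo a b)] 0 :=
      (integral_eq_zero_iff_of_nonneg (fun x => h0 x) hωI).1 hA.symm
    have haeσ : (fun x => ω x ^ (-1/(p-1))) =ᵐ[volume.restrict (Set.Ioo a b)] 0 := by
      filter_upwards [hae] with x hx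
      simp only [Pi.zero_apply] at hx ⊢
      rw [hx, Real.zero_rpow hexp_ne]
    have hσint : IntegrableOn (fun x => ω x ^ (-1/(p-1))) (Set.Ioo a b) volume :=
      (integrable_zero _ _ _).congr haeσ.symm
    refine ⟨hσint, ?_⟩
    have hz : ∫ x in Set.Ioo a b, ω x ^ (-1/(p-1)) = 0 := by
      rw [integral_congr_ae haeσ]
      simp
    rw [setAverage_eq, setAverage_eq, hz, smul_zero,
      Real.zero_rpow (by linarith : p - 1 ≠ 0), mul_zero]
    positivity
  · -- main case
    set A := ∫ x in Set.Ioo a b, ω x with hAdef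
    set D := (8 * C * (b - a)) ^ p with hDdef
    have hD : 0 < D := by positivity
    set B := (D / A) ^ (1/(p-1)) with hBdef
    have hB0 : 0 ≤ B := Real.rpow_nonneg (by positivity) _
    have bound : ∀ ε : ℝ, 0 < ε → ∫ x in Set.Ioo a b, S19.sg ω p ε x ≤ B := by
      intro ε hε
      have hS0 : 0 ≤ ∫ x in Set.Ioo a b, S19.sg ω p ε x :=
        setIntegral_nonneg measurableSet_Ioo fun t _ => S19.sg_nonneg hε.le h0 t
      have h1 : (∫ x in Set.Ioo a b, S19.sg ω p ε x) ^ (p-1) ≤ D / A :=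
        (le_div_iff₀ hA).2 (keyε ε hε)
      have h2 : ∫ x in Set.Ioo a b, S19.sg ω p ε x
          = ((∫ x in Set.Ioo a b, S19.sg ω p ε x) ^ (p-1)) ^ (1/(p-1)) := by
        rw [← Real.rpow_mul hS0, mul_one_div_cancel (by linarith : p - 1 ≠ 0), Real.rpow_one]
      rw [h2]
      exact Real.rpow_le_rpow (Real.rpow_nonneg hS0 _) h1 (by
        have : (0:ℝ) < p - 1 := by linarith
        positivity)
    have hsgI : ∀ ε : ℝ, 0 < ε → IntegrableOn (S19.sg ω p ε) (Set.Ioo a b) volume :=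
      fun ε hε => (integrable_indicator_iff measurableSet_Ioo).1 (S19.gg_int hp hε h0 hω)
    have hlin : ∀ n : ℕ, (∫⁻ x in Set.Ioo a b,
        ENNReal.ofReal (S19.sg ω p (1/(n+1)) x)) ≤ ENNReal.ofReal B := by
      intro n
      have hεn : (0:ℝ) < 1/(n+1) := by positivity
      rw [← ofReal_integral_eq_lintegral_ofReal (hsgI _ hεn)
        (Filter.Eventually.of_forall fun x => S19.sg_nonneg hεn.le h0 x)]
      exact ENNReal.ofReal_le_ofReal (bound _ hεn)
    have hmeas : ∀ n : ℕ, AEMeasurable (fun x => ENNReal.ofReal (S19.sg ω p (1/(n+1)) x))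
        (volume.restrict (Set.Ioo a b)) := by
      intro n
      have h1 : AEMeasurable (S19.sg ω p (1/(n+1))) volume :=
        (hω.aemeasurable.add aemeasurable_const).pow_const _
      exact (ENNReal.measurable_ofReal.comp_aemeasurable h1).restrict
    have hFatou : (∫⁻ x in Set.Ioo a b, Filter.liminf
        (fun n : ℕ => ENNReal.ofReal (S19.sg ω p (1/(n+1)) x)) Filter.atTop) ≤
          ENNReal.ofReal B := by
      refine le_trans (lintegral_liminf_le' hmeas) ?_
      exact Filter.liminf_le_of_frequently_le (Filter.Frequently.of_forall hlin)
    have hpt : ∀ x : ℝ, ENNReal.ofReal (ω x ^ (-1/(p-1))) ≤ Filter.liminf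
        (fun n : ℕ => ENNReal.ofReal (S19.sg ω p (1/(n+1)) x)) Filter.atTop := by
      intro x
      rcases (h0 x).eq_or_lt with hx0 | hx0
      · rw [← hx0, Real.zero_rpow hexp_ne, ENNReal.ofReal_zero]
        exact bot_le
      · have ht1 : Filter.Tendsto (fun n : ℕ => ω x + 1/(n+1)) Filter.atTop (nhds (ω x)) := by
          have h2 : Filter.Tendsto (fun n : ℕ => 1 / ((n : ℝ) + 1)) Filter.atTop (nhds 0) :=
            tendsto_one_div_add_atTop_nhds_zero_nat
          have h3 := Filter.Tendsto.add (tendsto_const_nhds (x := ω x) (f := Filter.atTop)) h2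
          simpa using h3
        have ht2 : Filter.Tendsto (fun n : ℕ => S19.sg ω p (1/(n+1)) x) Filter.atTop
            (nhds (ω x ^ (-1/(p-1)))) :=
          (Real.continuousAt_rpow_const _ _ (Or.inl (ne_of_gt hx0))).tendsto.comp ht1
        have ht3 : Filter.Tendsto (fun n : ℕ => ENNReal.ofReal (S19.sg ω p (1/(n+1)) x))
            Filter.atTop (nhds (ENNReal.ofReal (ω x ^ (-1/(p-1))))) :=
          (ENNReal.continuous_ofReal.tendsto _).comp ht2
        rw [ht3.liminf_eq]
    have hσle : (∫⁻ x in Set.Ioo a b, ENNReal.ofReal (ω x ^ (-1/(p-1)))) ≤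
        ENNReal.ofReal B :=
      le_trans (lintegral_mono fun x => hpt x) hFatou
    have hσnn : 0 ≤ᵐ[volume.restrict (Set.Ioo a b)] fun x => ω x ^ (-1/(p-1)) :=
      Filter.Eventually.of_forall fun x => Real.rpow_nonneg (h0 x) _
    have hσmeas : AEStronglyMeasurable (fun x => ω x ^ (-1/(p-1)))
        (volume.restrict (Set.Ioo a b)) :=
      ((hω.aemeasurable.pow_const _).restrict).aestronglyMeasurable
    have hσint : IntegrableOn (fun x => ω x ^ (-1/(p-1))) (Set.Ioo a b) volume := by
      refine ⟨hσmeas, ?_⟩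
      rw [hasFiniteIntegral_iff_ofReal hσnn]
      exact lt_of_le_of_lt hσle ENNReal.ofReal_lt_top
    refine ⟨hσint, ?_⟩
    have hIσ : ∫ x in Set.Ioo a b, ω x ^ (-1/(p-1)) ≤ B := by
      have h4 := ofReal_integral_eq_lintegral_ofReal hσint hσnn
      have h5 : ENNReal.ofReal (∫ x in Set.Ioo a b, ω x ^ (-1/(p-1))) ≤ ENNReal.ofReal B :=
        h4 ▸ hσle
      exact (ENNReal.ofReal_le_ofReal_iff hB0).1 h5
    have hσI0 : 0 ≤ ∫ x in Set.Ioo a b, ω x ^ (-1/(p-1)) :=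
      setIntegral_nonneg measurableSet_Ioo fun t _ => Real.rpow_nonneg (h0 t) _
    rw [setAverage_eq, setAverage_eq, measureReal_def, hvol, smul_eq_mul, smul_eq_mul]
    rcases eq_or_lt_of_le hσI0 with hσz | hσpos
    · rw [← hσz, mul_zero, Real.zero_rpow (by linarith : p - 1 ≠ 0), mul_zero]
      positivity
    · have hBpos : 0 < B := lt_of_lt_of_le hσpos hIσ
      calc ((b-a)⁻¹ * A) * ((b-a)⁻¹ * ∫ x in Set.Ioo a b, ω x ^ (-1/(p-1))) ^ (p-1)
          ≤ ((b-a)⁻¹ * A) * ((b-a)⁻¹ * B) ^ (p-1) := by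
            apply mul_le_mul_of_nonneg_left
              (Real.rpow_le_rpow (by positivity)
                (mul_le_mul_of_nonneg_left hIσ (by positivity)) (by linarith))
              (by positivity)
        _ = (8*C) ^ p := by
            apply S19.log_eq_imp_eq (by positivity) (by positivity)
            rw [hBdef, hDdef]
            simp (disch := positivity) only [Real.log_mul, Real.log_div, Real.log_rpow,
              Real.log_inv]
            have hne : p - 1 ≠ 0 := by linarith
            field_simp
            ring

end
end
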